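/- arXiv:2212.11404 — 2 statements merged into one kernel-verified Lean document; each statement's English description precedes it below -/
import Mathlib

section
/- With the circle setup and for n ≥ 2: the subspace of uE^c(n) where all radii r_j are positive coincides with uE′(n), and the inclusion uE′(n) ↪ uE^c(n) is an equivariant homotopy equivalence: there exist a continuous map g : uE^c(n) → uE′(n) and continuous homotopies from g composed with the inclusion to the identity of uE′(n) and from the inclusion composed with g to the identity of uE^c(n), such that g and every time-slice of both homotopies commute with: (a) simultaneous translation of all ζ_j by a fixed element of S¹; (b) the cyclic shift of indices j ↦ j+1 mod n applied simultaneously to the ζ_j, r_j and φ_j; (c) translation of each individual ζ_j by elements of ker π. -/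
noncomputable section

open Set

/-- The additive circle `S¹ = ℝ/2πℤ`. -/
abbrev S1 : Type := AddCircle (2 * Real.pi)

/-- The additive circle `B = ℝ/(2π/m)ℤ`, modeling `S¹/C_m`. -/
abbrev CircB (m : ℕ) : Type := AddCircle (2 * Real.pi / m)

/-- The arc `A(ζ, r) = {π(ζ) + s̄ : |s| < r} ∪ {π(ζ)} ⊆ B`. -/
def arcA (m : ℕ) (pr : S1 → CircB m) (ζ : S1) (r : ℝ) : Set (CircB m) :=
  insert (pr ζ) {z | ∃ s : ℝ, |s| < r ∧ z = pr ζ + ((s : ℝ) : CircB m)}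

/-- The space `uE′(n)` of configurations of disjoint arcs together with gap coordinates. -/
def uE' (m n : ℕ) [NeZero n] (pr : S1 → CircB m) :
    Set ((Fin n → S1 × ℝ) × (Fin n → ℝ)) :=
  {x | (∀ j, (x.1 j).2 ∈ Ioc 0 (Real.pi / m)) ∧
    (∀ j, x.2 j ∈ Ioo 0 (2 * Real.pi / m)) ∧
    (∀ i j, i ≠ j → arcA m pr (x.1 i).1 (x.1 i).2 ∩ arcA m pr (x.1 j).1 (x.1 j).2 = ∅) ∧
    (∀ j, pr (x.1 (j + 1)).1 = pr (x.1 j).1 + ((x.2 j : ℝ) : CircB m)) ∧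
    ∑ j, x.2 j = 2 * Real.pi / m}

/-- The extension `uE^c(n)` allowing radii and gaps to degenerate to `0`:  if two arcs
meet then both must have radius `0`. -/
def uEc (m n : ℕ) [NeZero n] (pr : S1 → CircB m) :
    Set ((Fin n → S1 × ℝ) × (Fin n → ℝ)) :=
  {x | (∀ j, (x.1 j).2 ∈ Icc 0 (Real.pi / m)) ∧
    (∀ j, x.2 j ∈ Icc 0 (2 * Real.pi / m)) ∧
    (∀ i j, i ≠ j →
      (arcA m pr (x.1 i).1 (x.1 i).2 ∩ arcA m pr (x.1 j).1 (x.1 j).2).Nonempty →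
      (x.1 i).2 = 0 ∧ (x.1 j).2 = 0) ∧
    (∀ j, pr (x.1 (j + 1)).1 = pr (x.1 j).1 + ((x.2 j : ℝ) : CircB m)) ∧
    ∑ j, x.2 j = 2 * Real.pi / m}

/-- Simultaneous translation of all circle coordinates by `a ∈ S¹`. -/
def transP (n : ℕ) (a : S1) (y : (Fin n → S1 × ℝ) × (Fin n → ℝ)) :
    (Fin n → S1 × ℝ) × (Fin n → ℝ) :=
  (fun j => ((y.1 j).1 + a, (y.1 j).2), y.2)

/-- Cyclic shift of indices `j ↦ j + 1 (mod n)`. -/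
def shiftP (n : ℕ) [NeZero n] (y : (Fin n → S1 × ℝ) × (Fin n → ℝ)) :
    (Fin n → S1 × ℝ) × (Fin n → ℝ) :=
  (fun j => y.1 (j - 1), fun j => y.2 (j - 1))

/-- Translation of each individual circle coordinate `ζ_j` by `k j`. -/
def kerP (n : ℕ) (k : Fin n → S1) (y : (Fin n → S1 × ℝ) × (Fin n → ℝ)) :
    (Fin n → S1 × ℝ) × (Fin n → ℝ) :=
  (fun j => ((y.1 j).1 + k j, (y.1 j).2), y.2)

namespace Stmt6

open scoped Fin.NatCast Fin.CommRing

/-- circumference of B -/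
def cc (m : ℕ) : ℝ := 2 * Real.pi / m

lemma cc_pos {m : ℕ} (hm : 1 ≤ m) : 0 < cc m := by
  have : (0:ℝ) < m := by exact_mod_cast hm
  exact div_pos (by positivity) this

lemma pi_div_eq {m : ℕ} (hm : 1 ≤ m) : Real.pi / m = cc m / 2 := by
  unfold cc; ring

lemma cB_add (m : ℕ) (a b : ℝ) : ((a + b : ℝ) : CircB m) = (a:ℝ) + (b:ℝ) := rfl
lemma cB_sub (m : ℕ) (a b : ℝ) : ((a - b : ℝ) : CircB m) = (a:ℝ) - (b:ℝ) := rfl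
lemma cB_neg (m : ℕ) (a : ℝ) : ((-a : ℝ) : CircB m) = -(a:ℝ) := rfl
lemma cB_zero (m : ℕ) : ((0 : ℝ) : CircB m) = 0 := rfl
lemma cB_cc (m : ℕ) : ((cc m : ℝ) : CircB m) = 0 := AddCircle.coe_period _

lemma pr_add {m : ℕ} (pr : S1 → CircB m)
    (hpr : ∀ s : ℝ, pr ((s : ℝ) : S1) = ((s : ℝ) : CircB m)) (x y : S1) :
    pr (x + y) = pr x + pr y := by
  induction x using QuotientAddGroup.induction_on with
  | H a =>
    induction y using QuotientAddGroup.induction_on with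
    | H b =>
      have : ((a : ℝ) : S1) + ((b:ℝ) : S1) = ((a + b : ℝ) : S1) := rfl
      rw [this, hpr, hpr, hpr]; rfl

lemma pr_add_real {m : ℕ} (pr : S1 → CircB m)
    (hpr : ∀ s : ℝ, pr ((s : ℝ) : S1) = ((s : ℝ) : CircB m)) (x : S1) (s : ℝ) :
    pr (x + ((s:ℝ) : S1)) = pr x + ((s:ℝ) : CircB m) := by
  rw [pr_add pr hpr, hpr]

/-- center is in the arc -/
lemma center_mem_arc {m : ℕ} (pr : S1 → CircB m) (ζ : S1) (r : ℝ) :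
    pr ζ ∈ arcA m pr ζ r := mem_insert _ _

lemma arc_inter_of_dist {m : ℕ} (pr : S1 → CircB m) (ζ₁ ζ₂ : S1) {r₁ r₂ : ℝ}
    (h₁ : 0 ≤ r₁) (h₂ : 0 ≤ r₂) (d : ℝ)
    (hd : ((d:ℝ) : CircB m) = pr ζ₂ - pr ζ₁) (hlt : |d| < r₁ + r₂) :
    (arcA m pr ζ₁ r₁ ∩ arcA m pr ζ₂ r₂).Nonempty := by
  have hd' : pr ζ₂ = pr ζ₁ + ((d:ℝ) : CircB m) := by rw [hd]; abel
  rcases eq_or_lt_of_le h₁ with h₁' | h₁'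
  · -- r₁ = 0
    refine ⟨pr ζ₁, center_mem_arc pr ζ₁ r₁, Or.inr ⟨-d, ?_, ?_⟩⟩
    · rw [abs_neg]; linarith [hlt]
    · rw [cB_neg, hd]; abel
  rcases eq_or_lt_of_le h₂ with h₂' | h₂'
  · refine ⟨pr ζ₂, Or.inr ⟨d, by linarith, hd'⟩, center_mem_arc pr ζ₂ r₂⟩
  · -- both positive
    set q := r₁ + r₂ with hq
    have hq0 : 0 < q := by positivity
    refine ⟨pr ζ₁ + ((d * (r₁ / q) : ℝ) : CircB m),
      Or.inr ⟨d * (r₁ / q), ?_, rfl⟩, Or.inr ⟨-(d * (r₂ / q)), ?_, ?_⟩⟩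
    · rw [abs_mul, abs_of_nonneg (by positivity : (0:ℝ) ≤ r₁ / q)]
      calc |d| * (r₁ / q) < q * (r₁ / q) := by
            apply mul_lt_mul_of_pos_right hlt; positivity
        _ = r₁ := by field_simp
    · rw [abs_neg, abs_mul, abs_of_nonneg (by positivity : (0:ℝ) ≤ r₂ / q)]
      calc |d| * (r₂ / q) < q * (r₂ / q) := by
            apply mul_lt_mul_of_pos_right hlt; positivity
        _ = r₂ := by field_simp
    · rw [hd', cB_neg]
      have : ((d * (r₁/q) : ℝ) : CircB m) + ((d * (r₂/q) : ℝ) : CircB m)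
          = ((d * (r₁/q) + d * (r₂/q) : ℝ) : CircB m) := rfl
      have h3 : d * (r₁/q) + d * (r₂/q) = d := by field_simp; ring
      rw [show pr ζ₁ + (d:ℝ) + -(((d * (r₂/q) : ℝ) : CircB m))
            = pr ζ₁ + ((d:ℝ) - ((d * (r₂/q) : ℝ) : CircB m)) from by abel,
        show ((d:ℝ) : CircB m) - ((d * (r₂/q) : ℝ) : CircB m) = ((d - d * (r₂/q) : ℝ) : CircB m) from rfl]
      congr 1
      congr 1
      field_simp; ring

lemma dist_of_arc_inter {m : ℕ} (pr : S1 → CircB m) (ζ₁ ζ₂ : S1) {r₁ r₂ : ℝ}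
    (h₁ : 0 ≤ r₁) (h₂ : 0 ≤ r₂)
    (h : (arcA m pr ζ₁ r₁ ∩ arcA m pr ζ₂ r₂).Nonempty) :
    (∃ d : ℝ, ((d:ℝ) : CircB m) = pr ζ₂ - pr ζ₁ ∧ |d| < r₁ + r₂) ∨ pr ζ₁ = pr ζ₂ := by
  obtain ⟨z, hz₁, hz₂⟩ := h
  rcases hz₁ with hz₁ | ⟨s, hs, rfl⟩
  · rcases hz₂ with hz₂ | ⟨u, hu, huz⟩
    · exact Or.inr (hz₁.symm.trans hz₂)
    · refine Or.inl ⟨-u, ?_, by rw [abs_neg]; linarith⟩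
      rw [cB_neg]
      have : pr ζ₁ = pr ζ₂ + ((u:ℝ) : CircB m) := hz₁ ▸ huz
      rw [this]; abel
  · rcases hz₂ with hz₂ | ⟨u, hu, huz⟩
    · refine Or.inl ⟨s, ?_, by linarith⟩
      rw [← hz₂]; abel
    · refine Or.inl ⟨s - u, ?_, lt_of_le_of_lt (abs_sub s u) (by linarith)⟩
      rw [cB_sub]
      have : pr ζ₁ + ((s:ℝ) : CircB m) = pr ζ₂ + ((u:ℝ) : CircB m) := huz ▸ rfl
      rw [show pr ζ₂ = pr ζ₁ + ((s:ℝ) : CircB m) - ((u:ℝ) : CircB m) from by rw [this]; abel]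
      abel



def gF (m n : ℕ) (φ : Fin n → ℝ) (j : Fin n) : ℝ := cc m / n - φ j

def oF (m n : ℕ) [NeZero n] (φ : Fin n → ℝ) (j : Fin n) : ℝ :=
  (∑ i : Fin n, (i.val : ℝ) * gF m n φ (j + i)) / n

lemma sum_shift {n : ℕ} [NeZero n] (φ : Fin n → ℝ) (j : Fin n) :
    ∑ i : Fin n, φ (j + i) = ∑ i : Fin n, φ i :=
  Equiv.sum_comp (Equiv.addLeft j) φ

lemma sum_gF {m n : ℕ} [NeZero n] (φ : Fin n → ℝ) (hsum : ∑ k, φ k = cc m) (j : Fin n) :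
    ∑ i : Fin n, gF m n φ (j + i) = 0 := by
  unfold gF
  rw [Finset.sum_sub_distrib, sum_shift φ j, hsum, Finset.sum_const, Finset.card_univ,
    Fintype.card_fin, nsmul_eq_mul]
  have hn : (n : ℝ) ≠ 0 := Nat.cast_ne_zero.mpr (NeZero.ne n)
  field_simp
  ring

lemma oF_shift {m n : ℕ} [NeZero n] (φ : Fin n → ℝ) (j : Fin n) :
    oF m n (fun l => φ (l - 1)) j = oF m n φ (j - 1) := by
  unfold oF gF
  congr 1
  refine Finset.sum_congr rfl fun i _ => ?_
  show (i.val : ℝ) * (cc m / n - φ (j + i - 1)) = _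
  rw [show j + i - 1 = j - 1 + i from by ring]

lemma oF_succ {m n : ℕ} [NeZero n] (φ : Fin n → ℝ) (hsum : ∑ k, φ k = cc m) (j : Fin n) :
    oF m n φ (j + 1) = oF m n φ j + gF m n φ j := by
  obtain ⟨n', rfl⟩ : ∃ n', n = n' + 1 :=
    ⟨n - 1, (Nat.succ_pred_eq_of_pos (Nat.pos_of_ne_zero (NeZero.ne n))).symm⟩
  have hn : ((n' + 1 : ℕ) : ℝ) ≠ 0 := Nat.cast_ne_zero.mpr (Nat.succ_ne_zero n')
  unfold oF
  rw [div_add' _ _ _ hn, div_eq_div_iff hn hn]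
  congr 1
  have reidx : ∑ i : Fin (n'+1), (i.val : ℝ) * gF m (n'+1) φ (j + 1 + i)
      = ∑ k : Fin (n'+1), (((k - 1 : Fin (n'+1)).val : ℝ)) * gF m (n'+1) φ (j + k) := by
    rw [← Equiv.sum_comp (Equiv.subRight (1 : Fin (n'+1)))
      (fun i => (i.val : ℝ) * gF m (n'+1) φ (j + 1 + i))]
    refine Finset.sum_congr rfl fun k _ => ?_
    simp only [Equiv.subRight_apply]
    rw [show j + 1 + (k - 1) = j + k from by ring]
  have hval : ∀ k : Fin (n'+1), ((k - 1 : Fin (n'+1)).val : ℝ)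
      = (k.val : ℝ) - 1 + (if k = 0 then ((n'+1 : ℕ) : ℝ) else 0) := by
    intro k
    rw [Fin.coe_sub_one]
    by_cases hk : k = 0
    · simp [hk]
    · have hk1 : 1 ≤ k.val := Nat.one_le_iff_ne_zero.mpr (fun h => hk (Fin.ext h))
      rw [if_neg hk, if_neg hk, Nat.cast_sub hk1]
      simp
  have split : ∑ k : Fin (n'+1), (((k - 1 : Fin (n'+1)).val : ℝ)) * gF m (n'+1) φ (j + k)
      = (∑ k : Fin (n'+1), (k.val : ℝ) * gF m (n'+1) φ (j + k))
        - (∑ k : Fin (n'+1), gF m (n'+1) φ (j + k))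
        + ((n'+1 : ℕ) : ℝ) * gF m (n'+1) φ j := by
    rw [← Finset.sum_sub_distrib]
    have : ∀ k : Fin (n'+1), (((k - 1 : Fin (n'+1)).val : ℝ)) * gF m (n'+1) φ (j + k)
        = ((k.val : ℝ) * gF m (n'+1) φ (j + k) - gF m (n'+1) φ (j + k))
          + (if k = 0 then ((n'+1 : ℕ) : ℝ) * gF m (n'+1) φ (j + k) else 0) := by
      intro k
      rw [hval k]
      by_cases hk : k = 0 <;> simp [hk] <;> ring
    rw [Finset.sum_congr rfl (fun k _ => this k), Finset.sum_add_distrib,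
      Finset.sum_ite_eq' Finset.univ (0 : Fin (n'+1))]
    simp
  rw [reidx, split, sum_gF φ hsum j]
  ring

/-- telescoped version -/
lemma oF_chain {m n : ℕ} [NeZero n] (φ : Fin n → ℝ) (hsum : ∑ k, φ k = cc m)
    (i : Fin n) (a : ℕ) :
    oF m n φ (((i.val + a : ℕ)) : Fin n)
      = oF m n φ i + ∑ l ∈ Finset.range a, gF m n φ (((i.val + l : ℕ)) : Fin n) := by
  induction a with
  | zero => simp [Fin.cast_val_eq_self]
  | succ a ih =>
    have : (((i.val + (a+1) : ℕ)) : Fin n) = (((i.val + a : ℕ)) : Fin n) + 1 := by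
      push_cast; ring
    rw [this, oF_succ φ hsum, ih, Finset.sum_range_succ]
    ring

section ChainLemmas
variable {m n : ℕ} [NeZero n] (pr : S1 → CircB m)

lemma pos_chain (ζ : Fin n → S1) (φ : Fin n → ℝ)
    (hch : ∀ j, pr (ζ (j + 1)) = pr (ζ j) + ((φ j : ℝ) : CircB m)) (i : Fin n) (a : ℕ) :
    pr (ζ (((i.val + a : ℕ)) : Fin n))
      = pr (ζ i) + ((∑ l ∈ Finset.range a, φ (((i.val + l : ℕ)) : Fin n) : ℝ) : CircB m) := by
  induction a with
  | zero => simp [Fin.cast_val_eq_self, show ((0:ℝ) : CircB m) = 0 from rfl]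
  | succ a ih =>
    have h1 : (((i.val + (a+1) : ℕ)) : Fin n) = (((i.val + a : ℕ)) : Fin n) + 1 := by
      push_cast; ring
    rw [h1, hch, ih, Finset.sum_range_succ, cB_add]
    abel

lemma window_le (φ : Fin n → ℝ) (hnn : ∀ j, 0 ≤ φ j) (hsum : ∑ k, φ k = cc m)
    (i : Fin n) {a : ℕ} (ha : a ≤ n) :
    ∑ l ∈ Finset.range a, φ (((i.val + l : ℕ)) : Fin n) ≤ cc m := by
  have h1 : ∑ l ∈ Finset.range a, φ (((i.val + l : ℕ)) : Fin n)
      ≤ ∑ l ∈ Finset.range n, φ (((i.val + l : ℕ)) : Fin n) :=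
    Finset.sum_le_sum_of_subset_of_nonneg (Finset.range_subset_range.mpr ha) (fun l _ _ => hnn _)
  have h2 : ∑ l ∈ Finset.range n, φ (((i.val + l : ℕ)) : Fin n) = cc m := by
    rw [← Fin.sum_univ_eq_sum_range (fun l => φ (((i.val + l : ℕ)) : Fin n)) n]
    have he : ∀ k : Fin n, φ (((i.val + k.val : ℕ)) : Fin n) = φ (i + k) := by
      intro k; congr 1
      all_goals (push_cast [Fin.cast_val_eq_self]; try ring)
    rw [Finset.sum_congr rfl (fun k _ => he k), sum_shift φ i, hsum]
  linarith

lemma P_bounds (hm : 1 ≤ m) (y : (Fin n → S1 × ℝ) × (Fin n → ℝ)) (hy : y ∈ uEc m n pr)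
    {i j : Fin n} (hij : i.val < j.val) :
    pr (y.1 j).1 = pr (y.1 i).1
        + ((∑ l ∈ Finset.range (j.val - i.val), y.2 (((i.val + l : ℕ)) : Fin n) : ℝ) : CircB m) ∧
    (y.1 i).2 + (y.1 j).2
        ≤ ∑ l ∈ Finset.range (j.val - i.val), y.2 (((i.val + l : ℕ)) : Fin n) ∧
    (y.1 i).2 + (y.1 j).2
        ≤ cc m - ∑ l ∈ Finset.range (j.val - i.val), y.2 (((i.val + l : ℕ)) : Fin n) := by
  obtain ⟨hr, hφ, hdisj, hch, hsum⟩ := hy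
  have hsum' : ∑ k, y.2 k = cc m := hsum
  set P := ∑ l ∈ Finset.range (j.val - i.val), y.2 (((i.val + l : ℕ)) : Fin n) with hP
  have hij' : i ≠ j := fun h => absurd (congrArg Fin.val h) (Nat.ne_of_lt hij)
  have hP0 : 0 ≤ P := Finset.sum_nonneg fun l _ => (hφ _).1
  have hPc : P ≤ cc m := window_le y.2 (fun k => (hφ k).1) hsum' i (by omega)
  have hzd : pr (y.1 j).1 = pr (y.1 i).1 + ((P : ℝ) : CircB m) := by
    have h := pos_chain pr (fun k => (y.1 k).1) y.2 hch i (j.val - i.val)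
    rwa [show i.val + (j.val - i.val) = j.val from by omega, Fin.cast_val_eq_self] at h
  have hdiff : ((P : ℝ) : CircB m) = pr (y.1 j).1 - pr (y.1 i).1 := by rw [hzd]; abel
  refine ⟨hzd, ?_, ?_⟩
  · by_contra h
    push_neg at h
    have hne := arc_inter_of_dist pr (y.1 i).1 (y.1 j).1 (hr i).1 (hr j).1 P
      hdiff (by rw [abs_of_nonneg hP0]; exact h)
    obtain ⟨h1, h2⟩ := hdisj i j hij' hne
    rw [h1, h2] at h; linarith
  · by_contra h
    push_neg at h
    have hne := arc_inter_of_dist pr (y.1 i).1 (y.1 j).1 (hr i).1 (hr j).1 (P - cc m)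
      (by rw [cB_sub, cB_cc, hdiff]; abel) (by rw [abs_of_nonpos (by linarith)]; linarith)
    obtain ⟨h1, h2⟩ := hdisj i j hij' hne
    rw [h1, h2] at h; linarith
end ChainLemmas

def rho (m n : ℕ) : ℝ := cc m / n / 4

def Hmap (m n : ℕ) [NeZero n] (y : (Fin n → S1 × ℝ) × (Fin n → ℝ)) (t : ℝ) :
    (Fin n → S1 × ℝ) × (Fin n → ℝ) :=
  (fun j => ((y.1 j).1 + ((((1 - t) * oF m n y.2 j : ℝ)) : S1),
      (1 - t) * rho m n + t * (y.1 j).2),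
   fun j => (1 - t) * (cc m / n) + t * y.2 j)

lemma Hmap_one (m n : ℕ) [NeZero n] (y : (Fin n → S1 × ℝ) × (Fin n → ℝ)) :
    Hmap m n y 1 = y := by
  unfold Hmap
  refine Prod.ext (funext fun j => Prod.ext ?_ ?_) (funext fun j => ?_)
  · show (y.1 j).1 + ((((1 - 1) * oF m n y.2 j : ℝ)) : S1) = (y.1 j).1
    rw [show ((1:ℝ) - 1) * oF m n y.2 j = 0 from by ring,
      show ((0:ℝ) : S1) = 0 from rfl, add_zero]
  · show (1 - 1) * rho m n + 1 * (y.1 j).2 = (y.1 j).2; ring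
  · show (1 - 1) * (cc m / n) + 1 * y.2 j = y.2 j; ring

set_option maxHeartbeats 1000000 in
lemma Hmap_aux (m n : ℕ) [NeZero n] (hm : 1 ≤ m) (hn : 2 ≤ n) (pr : S1 → CircB m)
    (hpr : ∀ s : ℝ, pr ((s : ℝ) : S1) = ((s : ℝ) : CircB m))
    (y : (Fin n → S1 × ℝ) × (Fin n → ℝ)) (hy : y ∈ uEc m n pr) {t : ℝ}
    (ht0 : 0 ≤ t) (ht1 : t < 1) {i j : Fin n} (hij : i.val < j.val) :
    ¬ (arcA m pr ((Hmap m n y t).1 i).1 ((Hmap m n y t).1 i).2 ∩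
       arcA m pr ((Hmap m n y t).1 j).1 ((Hmap m n y t).1 j).2).Nonempty := by
  intro hne
  obtain ⟨hzd, hPr, hPrc⟩ := P_bounds pr hm y hy hij
  obtain ⟨hr, hφ, hdisj, hch, hsum⟩ := hy
  have hsum' : ∑ k, y.2 k = cc m := hsum
  have hc := cc_pos hm
  have hπ := pi_div_eq hm
  have hnR : (2:ℝ) ≤ n := by exact_mod_cast hn
  have hn0 : (0:ℝ) < n := by linarith
  set a := j.val - i.val with ha
  have ha1 : 1 ≤ a := by omega
  have haR : (1:ℝ) ≤ a := by exact_mod_cast ha1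
  have haR2 : (a:ℝ) ≤ (n:ℝ) - 1 := by
    have h' : a ≤ n - 1 := by omega
    have h'' := (Nat.cast_le (α := ℝ)).mpr h'
    rwa [Nat.cast_sub (by omega : 1 ≤ n), Nat.cast_one] at h''
  set P := ∑ l ∈ Finset.range a, y.2 (((i.val + l : ℕ)) : Fin n) with hP
  have hP0 : 0 ≤ P := Finset.sum_nonneg fun l _ => (hφ _).1
  set ccn := cc m / n with hccn
  have hccn0 : 0 < ccn := by rw [hccn]; positivity
  have hcc_eq : cc m = n * ccn := by rw [hccn]; field_simp
  set ri := (y.1 i).2 with hri_def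
  set rj := (y.1 j).2 with hrj_def
  have hri0 : 0 ≤ ri := (hr i).1
  have hrj0 : 0 ≤ rj := (hr j).1
  have hrho : rho m n = ccn / 4 := rfl
  have hri' : ((Hmap m n y t).1 i).2 = (1 - t) * rho m n + t * ri := rfl
  have hrj' : ((Hmap m n y t).1 j).2 = (1 - t) * rho m n + t * rj := rfl
  have hζi : ((Hmap m n y t).1 i).1 = (y.1 i).1 + ((((1 - t) * oF m n y.2 i : ℝ)) : S1) := rfl
  have hζj : ((Hmap m n y t).1 j).1 = (y.1 j).1 + ((((1 - t) * oF m n y.2 j : ℝ)) : S1) := rfl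
  -- key computation while bodies are transparent
  have hoF : oF m n y.2 j = oF m n y.2 i + ((a:ℝ) * ccn - P) := by
    have h1 := oF_chain y.2 hsum' i a
    rw [show i.val + a = j.val from by omega, Fin.cast_val_eq_self] at h1
    rw [h1]
    congr 1
    unfold gF
    rw [Finset.sum_sub_distrib, Finset.sum_const, Finset.card_range, nsmul_eq_mul, ← hP, hccn]
  clear_value a P ccn ri rj
  set P' := (1 - t) * ((a : ℝ) * ccn) + t * P with hP'
  set R := ((1 - t) * rho m n + t * ri) + ((1 - t) * rho m n + t * rj) with hR
  clear_value P' R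
  -- R bounds
  have e2 : t * (ri + rj) ≤ t * P := mul_le_mul_of_nonneg_left hPr ht0
  have e1 : (1 - t) * (ccn / 2) ≤ (1 - t) * ((a:ℝ) * ccn) :=
    mul_le_mul_of_nonneg_left (by nlinarith) (by linarith)
  have hR1 : R ≤ P' := by rw [hR, hP', hrho]; nlinarith
  have e2' : t * (ri + rj) ≤ t * (cc m - P) := mul_le_mul_of_nonneg_left hPrc ht0
  have e3 : (1 - t) * (ccn / 2) ≤ (1 - t) * (((n:ℝ) - a) * ccn) :=
    mul_le_mul_of_nonneg_left (by nlinarith) (by linarith)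
  have hR2 : R ≤ cc m - P' := by
    have hsplit : cc m - P' = (1 - t) * (((n:ℝ) - a) * ccn) + t * (cc m - P) := by
      rw [hP', hcc_eq]; ring
    rw [hsplit, hR, hrho]; nlinarith
  have hRpos : 0 < R := by
    rw [hR, hrho]
    nlinarith [mul_nonneg ht0 hri0, mul_nonneg ht0 hrj0]
  -- center difference
  have hcast2 : ∀ u v : ℝ, (pr (y.1 i).1 + ((u:ℝ) : CircB m)) - (pr (y.1 i).1 + ((v:ℝ) : CircB m))
      = ((u - v : ℝ) : CircB m) := fun u v => by rw [cB_sub]; abel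
  have hcen : pr ((Hmap m n y t).1 j).1 - pr ((Hmap m n y t).1 i).1 = ((P' : ℝ) : CircB m) := by
    rw [hζi, hζj, pr_add_real pr hpr, pr_add_real pr hpr, hzd, hoF]
    have hcomb : pr (y.1 i).1 + ((P:ℝ) : CircB m)
          + (((1 - t) * (oF m n y.2 i + ((a:ℝ) * ccn - P)) : ℝ) : CircB m)
        = pr (y.1 i).1
          + ((P + (1 - t) * (oF m n y.2 i + ((a:ℝ) * ccn - P)) : ℝ) : CircB m) := by
      rw [cB_add]; abel
    rw [hcomb, hcast2]
    congr 1
    rw [hP']; ring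
  have hri'0 : 0 ≤ ((Hmap m n y t).1 i).2 := by
    rw [hri', hrho]; nlinarith [mul_nonneg ht0 hri0]
  have hrj'0 : 0 ≤ ((Hmap m n y t).1 j).2 := by
    rw [hrj', hrho]; nlinarith [mul_nonneg ht0 hrj0]
  have hRsum : ((Hmap m n y t).1 i).2 + ((Hmap m n y t).1 j).2 = R := by
    rw [hri', hrj', hR]
  rcases dist_of_arc_inter pr _ _ hri'0 hrj'0 hne with ⟨d, hdeq, hdlt⟩ | hcen0
  · rw [hcen] at hdeq
    have hzero : ((d - P' : ℝ) : CircB m) = 0 := by rw [cB_sub, hdeq]; abel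
    obtain ⟨z, hz⟩ := (AddCircle.coe_eq_zero_iff _).mp hzero
    rw [zsmul_eq_mul] at hz
    have hdval : d = P' + (z:ℝ) * cc m := by
      have hcc : (z:ℝ) * cc m = d - P' := hz
      linarith
    rw [hRsum] at hdlt
    obtain ⟨hd1, hd2⟩ := abs_lt.mp hdlt
    rcases lt_trichotomy z 0 with hz' | hz' | hz'
    · have hz1 : (z:ℝ) ≤ -1 := by exact_mod_cast (by omega : z ≤ -1)
      have hmz : (z:ℝ) * cc m ≤ (-1) * cc m := mul_le_mul_of_nonneg_right hz1 hc.le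
      linarith
    · subst hz'
      rw [Int.cast_zero, zero_mul, add_zero] at hdval
      linarith
    · have hz1 : (1:ℝ) ≤ (z:ℝ) := by exact_mod_cast hz'
      have hmz : (1:ℝ) * cc m ≤ (z:ℝ) * cc m := mul_le_mul_of_nonneg_right hz1 hc.le
      linarith
  · rw [hcen0] at hcen
    have hzero : ((P' : ℝ) : CircB m) = 0 := by rw [← hcen]; abel
    obtain ⟨z, hz⟩ := (AddCircle.coe_eq_zero_iff _).mp hzero
    rw [zsmul_eq_mul] at hz
    have hcc : (z:ℝ) * cc m = P' := hz
    rcases lt_trichotomy z 0 with hz' | hz' | hz'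
    · have hz1 : (z:ℝ) ≤ -1 := by exact_mod_cast (by omega : z ≤ -1)
      have hmz : (z:ℝ) * cc m ≤ (-1) * cc m := mul_le_mul_of_nonneg_right hz1 hc.le
      linarith
    · subst hz'
      rw [Int.cast_zero, zero_mul] at hcc
      linarith
    · have hz1 : (1:ℝ) ≤ (z:ℝ) := by exact_mod_cast hz'
      have hmz : (1:ℝ) * cc m ≤ (z:ℝ) * cc m := mul_le_mul_of_nonneg_right hz1 hc.le
      linarith

lemma uE'_subset (m n : ℕ) [NeZero n] (pr : S1 → CircB m) : uE' m n pr ⊆ uEc m n pr := by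
  intro y hy
  obtain ⟨hr, hφ, hdisj, hch, hsum⟩ := hy
  exact ⟨fun j => ⟨(hr j).1.le, (hr j).2⟩, fun j => ⟨(hφ j).1.le, (hφ j).2.le⟩,
    fun i j hij hne => absurd hne (by rw [hdisj i j hij]; exact Set.not_nonempty_empty),
    hch, hsum⟩

set_option maxHeartbeats 1000000 in
lemma Hmap_mem (m n : ℕ) [NeZero n] (hm : 1 ≤ m) (hn : 2 ≤ n) (pr : S1 → CircB m)
    (hpr : ∀ s : ℝ, pr ((s : ℝ) : S1) = ((s : ℝ) : CircB m))
    (y : (Fin n → S1 × ℝ) × (Fin n → ℝ)) (hy : y ∈ uEc m n pr) {t : ℝ}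
    (ht0 : 0 ≤ t) (ht1 : t < 1) : Hmap m n y t ∈ uE' m n pr := by
  have hdisj' : ∀ i j : Fin n, i ≠ j →
      arcA m pr ((Hmap m n y t).1 i).1 ((Hmap m n y t).1 i).2 ∩
        arcA m pr ((Hmap m n y t).1 j).1 ((Hmap m n y t).1 j).2 = ∅ := by
    intro i j hij
    rw [← Set.not_nonempty_iff_eq_empty]
    rcases lt_trichotomy i.val j.val with h | h | h
    · exact Hmap_aux m n hm hn pr hpr y hy ht0 ht1 h
    · exact absurd (Fin.ext h) hij
    · intro hne
      obtain ⟨x, h1, h2⟩ := hne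
      exact Hmap_aux m n hm hn pr hpr y hy ht0 ht1 h ⟨x, h2, h1⟩
  obtain ⟨hr, hφ, hdisj, hch, hsum⟩ := hy
  have hsum' : ∑ k, y.2 k = cc m := hsum
  have hc := cc_pos hm
  have hπ := pi_div_eq hm
  have hnR : (2:ℝ) ≤ n := by exact_mod_cast hn
  have hn0 : (0:ℝ) < n := by linarith
  have hρpos : 0 < rho m n := by
    rw [show rho m n = cc m / n / 4 from rfl]; positivity
  refine ⟨?_, ?_, hdisj', ?_, ?_⟩
  · intro k
    constructor
    · show 0 < (1 - t) * rho m n + t * (y.1 k).2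
      nlinarith [mul_nonneg ht0 (hr k).1, mul_pos (show (0:ℝ) < 1 - t by linarith) hρpos]
    · show (1 - t) * rho m n + t * (y.1 k).2 ≤ Real.pi / m
      have h0 : cc m / n ≤ cc m := div_le_self hc.le (by linarith)
      have h1 : rho m n ≤ Real.pi / m := by
        rw [show rho m n = cc m / n / 4 from rfl, hπ]; linarith
      have e1 : (1 - t) * rho m n ≤ (1 - t) * (Real.pi / m) :=
        mul_le_mul_of_nonneg_left h1 (by linarith)
      have e2 : t * (y.1 k).2 ≤ t * (Real.pi / m) :=
        mul_le_mul_of_nonneg_left (hr k).2 ht0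
      linarith
  · intro k
    constructor
    · show 0 < (1 - t) * (cc m / n) + t * y.2 k
      nlinarith [mul_nonneg ht0 (hφ k).1,
        mul_pos (show (0:ℝ) < 1 - t by linarith) (show (0:ℝ) < cc m / n by positivity)]
    · show (1 - t) * (cc m / n) + t * y.2 k < 2 * Real.pi / m
      have hccn : cc m / n < cc m := by
        rw [div_lt_iff₀ hn0]; nlinarith
      have e1 : (1 - t) * (cc m / n) < (1 - t) * cc m :=
        mul_lt_mul_of_pos_left hccn (by linarith)
      have e2 : t * y.2 k ≤ t * cc m := mul_le_mul_of_nonneg_left (hφ k).2 ht0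
      have hcceq : cc m = 2 * Real.pi / m := rfl
      linarith
  · intro k
    show pr ((y.1 (k+1)).1 + ((((1 - t) * oF m n y.2 (k+1) : ℝ)) : S1))
        = pr ((y.1 k).1 + ((((1 - t) * oF m n y.2 k : ℝ)) : S1))
          + (((1 - t) * (cc m / n) + t * y.2 k : ℝ) : CircB m)
    rw [pr_add_real pr hpr, pr_add_real pr hpr, hch k, oF_succ y.2 hsum' k]
    have hcomb : ∀ u v : ℝ, pr (y.1 k).1 + ((u:ℝ) : CircB m) + ((v:ℝ) : CircB m)
        = pr (y.1 k).1 + ((u + v : ℝ) : CircB m) := fun u v => by rw [cB_add]; abel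
    rw [hcomb, hcomb]
    congr 1
    unfold gF; ring
  · show ∑ k, ((1 - t) * (cc m / n) + t * y.2 k) = 2 * Real.pi / m
    rw [Finset.sum_add_distrib, ← Finset.mul_sum, ← Finset.mul_sum, hsum,
      Finset.sum_const, Finset.card_univ, Fintype.card_fin, nsmul_eq_mul]
    have hm0 : (m:ℝ) ≠ 0 := by positivity
    have hn0' : (n:ℝ) ≠ 0 := by positivity
    rw [show cc m = 2 * Real.pi / m from rfl]
    field_simp
    ring

lemma one_ne_zero_fin (n : ℕ) [NeZero n] (hn : 2 ≤ n) : (1 : Fin n) ≠ 0 := by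
  intro h
  have h1 : (1 : Fin n).val = 1 := by
    rw [Fin.val_one']; exact Nat.mod_eq_of_lt hn
  rw [h] at h1
  simp at h1

lemma part1 (m n : ℕ) [NeZero n] (hm : 1 ≤ m) (hn : 2 ≤ n) (pr : S1 → CircB m) :
    {y ∈ uEc m n pr | ∀ j, 0 < (y.1 j).2} = uE' m n pr := by
  ext y
  constructor
  · rintro ⟨⟨hr, hφ, hdisj, hch, hsum⟩, hpos⟩
    refine ⟨fun j => ⟨hpos j, (hr j).2⟩, ?_, ?_, hch, hsum⟩
    · intro k
      have hkk : k ≠ k + 1 := by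
        intro h
        exact one_ne_zero_fin n hn (left_eq_add.mp h)
      rcases eq_or_lt_of_le (hφ k).1 with h0 | h0
      · exfalso
        have hcen : pr (y.1 (k+1)).1 = pr (y.1 k).1 := by
          rw [hch k, ← h0, show ((0:ℝ) : CircB m) = 0 from rfl, add_zero]
        have hne : (arcA m pr (y.1 k).1 (y.1 k).2
            ∩ arcA m pr (y.1 (k+1)).1 (y.1 (k+1)).2).Nonempty :=
          ⟨pr (y.1 k).1, center_mem_arc pr _ _, hcen ▸ center_mem_arc pr (y.1 (k+1)).1 _⟩
        exact absurd ((hdisj k (k+1) hkk hne).1) (ne_of_gt (hpos k))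
      rcases eq_or_lt_of_le (hφ k).2 with hc0 | hc0
      · exfalso
        have hcen : pr (y.1 (k+1)).1 = pr (y.1 k).1 := by
          rw [hch k, hc0, show ((2 * Real.pi / m : ℝ) : CircB m) = 0 from cB_cc m, add_zero]
        have hne : (arcA m pr (y.1 k).1 (y.1 k).2
            ∩ arcA m pr (y.1 (k+1)).1 (y.1 (k+1)).2).Nonempty :=
          ⟨pr (y.1 k).1, center_mem_arc pr _ _, hcen ▸ center_mem_arc pr (y.1 (k+1)).1 _⟩
        exact absurd ((hdisj k (k+1) hkk hne).1) (ne_of_gt (hpos k))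
      exact ⟨h0, hc0⟩
    · intro i j hij
      rw [← Set.not_nonempty_iff_eq_empty]
      intro hne
      exact absurd ((hdisj i j hij hne).1) (ne_of_gt (hpos i))
  · intro hy
    exact ⟨uE'_subset m n pr hy, fun j => (hy.1 j).1⟩

lemma Hmap_transP (m n : ℕ) [NeZero n] (a : S1) (y : (Fin n → S1 × ℝ) × (Fin n → ℝ)) (t : ℝ) :
    Hmap m n (transP n a y) t = transP n a (Hmap m n y t) := by
  unfold Hmap transP
  refine Prod.ext (funext fun j => Prod.ext ?_ ?_) rfl
  · show (y.1 j).1 + a + ((((1 - t) * oF m n y.2 j : ℝ)) : S1)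
      = (y.1 j).1 + ((((1 - t) * oF m n y.2 j : ℝ)) : S1) + a
    rw [add_right_comm]
  · rfl

lemma Hmap_kerP (m n : ℕ) [NeZero n] (k : Fin n → S1) (y : (Fin n → S1 × ℝ) × (Fin n → ℝ))
    (t : ℝ) : Hmap m n (kerP n k y) t = kerP n k (Hmap m n y t) := by
  unfold Hmap kerP
  refine Prod.ext (funext fun j => Prod.ext ?_ ?_) rfl
  · show (y.1 j).1 + k j + ((((1 - t) * oF m n y.2 j : ℝ)) : S1)
      = (y.1 j).1 + ((((1 - t) * oF m n y.2 j : ℝ)) : S1) + k j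
    rw [add_right_comm]
  · rfl

lemma Hmap_shiftP (m n : ℕ) [NeZero n] (y : (Fin n → S1 × ℝ) × (Fin n → ℝ)) (t : ℝ) :
    Hmap m n (shiftP n y) t = shiftP n (Hmap m n y t) := by
  unfold Hmap shiftP
  refine Prod.ext (funext fun j => Prod.ext ?_ ?_) (funext fun j => rfl)
  · show (y.1 (j - 1)).1 + ((((1 - t) * oF m n (fun l => y.2 (l - 1)) j : ℝ)) : S1)
      = (y.1 (j - 1)).1 + ((((1 - t) * oF m n y.2 (j - 1) : ℝ)) : S1)
    rw [oF_shift]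
  · rfl

lemma arc_mem_translate {m : ℕ} (pr : S1 → CircB m) {ζ ζ' : S1} {β : CircB m}
    (h : pr ζ' = pr ζ + β) (r : ℝ) (z : CircB m) :
    z ∈ arcA m pr ζ' r ↔ z - β ∈ arcA m pr ζ r := by
  unfold arcA
  simp only [mem_insert_iff, mem_setOf_eq, h]
  constructor
  · rintro (rfl | ⟨s, hs, rfl⟩)
    · left; abel
    · right; exact ⟨s, hs, by abel⟩
  · rintro (h1 | ⟨s, hs, h1⟩)
    · left; rw [sub_eq_iff_eq_add.mp h1]; try abel
    · right; exact ⟨s, hs, by rw [sub_eq_iff_eq_add.mp h1]; abel⟩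

lemma inter_translate {m : ℕ} (pr : S1 → CircB m) {ζ₁ ζ₂ ζ₁' ζ₂' : S1} {β : CircB m}
    (h₁ : pr ζ₁' = pr ζ₁ + β) (h₂ : pr ζ₂' = pr ζ₂ + β) (r₁ r₂ : ℝ) :
    (arcA m pr ζ₁' r₁ ∩ arcA m pr ζ₂' r₂).Nonempty
      ↔ (arcA m pr ζ₁ r₁ ∩ arcA m pr ζ₂ r₂).Nonempty := by
  constructor
  · rintro ⟨z, hz1, hz2⟩
    exact ⟨z - β, (arc_mem_translate pr h₁ r₁ z).mp hz1, (arc_mem_translate pr h₂ r₂ z).mp hz2⟩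
  · rintro ⟨z, hz1, hz2⟩
    refine ⟨z + β, (arc_mem_translate pr h₁ r₁ _).mpr ?_, (arc_mem_translate pr h₂ r₂ _).mpr ?_⟩
    · simpa [add_sub_cancel_right] using hz1
    · simpa [add_sub_cancel_right] using hz2

lemma addP_mem_uEc (m n : ℕ) [NeZero n] (pr : S1 → CircB m)
    (hpr : ∀ s : ℝ, pr ((s : ℝ) : S1) = ((s : ℝ) : CircB m))
    (w : Fin n → S1) (β : CircB m) (hw : ∀ j, pr (w j) = β)
    (y : (Fin n → S1 × ℝ) × (Fin n → ℝ)) (hy : y ∈ uEc m n pr) :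
    ((fun j => ((y.1 j).1 + w j, (y.1 j).2), y.2) :
      (Fin n → S1 × ℝ) × (Fin n → ℝ)) ∈ uEc m n pr := by
  obtain ⟨hr, hφ, hdisj, hch, hsum⟩ := hy
  have hprw : ∀ j, pr ((y.1 j).1 + w j) = pr (y.1 j).1 + β := fun j => by
    rw [pr_add pr hpr, hw]
  refine ⟨hr, hφ, ?_, ?_, hsum⟩
  · intro i j hij hne
    exact hdisj i j hij ((inter_translate pr (hprw i) (hprw j) _ _).mp hne)
  · intro j
    show pr ((y.1 (j+1)).1 + w (j+1)) = pr ((y.1 j).1 + w j) + _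
    rw [hprw, hprw, hch j]
    abel

lemma addP_mem_uE' (m n : ℕ) [NeZero n] (pr : S1 → CircB m)
    (hpr : ∀ s : ℝ, pr ((s : ℝ) : S1) = ((s : ℝ) : CircB m))
    (w : Fin n → S1) (β : CircB m) (hw : ∀ j, pr (w j) = β)
    (y : (Fin n → S1 × ℝ) × (Fin n → ℝ)) (hy : y ∈ uE' m n pr) :
    ((fun j => ((y.1 j).1 + w j, (y.1 j).2), y.2) :
      (Fin n → S1 × ℝ) × (Fin n → ℝ)) ∈ uE' m n pr := by
  obtain ⟨hr, hφ, hdisj, hch, hsum⟩ := hy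
  have hprw : ∀ j, pr ((y.1 j).1 + w j) = pr (y.1 j).1 + β := fun j => by
    rw [pr_add pr hpr, hw]
  refine ⟨hr, hφ, ?_, ?_, hsum⟩
  · intro i j hij
    rw [← Set.not_nonempty_iff_eq_empty]
    intro hne
    have := (inter_translate pr (hprw i) (hprw j) _ _).mp hne
    rw [hdisj i j hij] at this
    exact Set.not_nonempty_empty this
  · intro j
    show pr ((y.1 (j+1)).1 + w (j+1)) = pr ((y.1 j).1 + w j) + _
    rw [hprw, hprw, hch j]
    abel

lemma sub_ne_sub {n : ℕ} [NeZero n] {i j : Fin n} (hij : i ≠ j) : i - 1 ≠ j - 1 := by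
  intro h
  apply hij
  have := congrArg (· + 1) h
  simpa using this

lemma shiftP_mem_uEc (m n : ℕ) [NeZero n] (pr : S1 → CircB m)
    (y : (Fin n → S1 × ℝ) × (Fin n → ℝ)) (hy : y ∈ uEc m n pr) :
    shiftP n y ∈ uEc m n pr := by
  obtain ⟨hr, hφ, hdisj, hch, hsum⟩ := hy
  refine ⟨fun j => hr (j-1), fun j => hφ (j-1), ?_, ?_, ?_⟩
  · intro i j hij hne
    exact hdisj (i-1) (j-1) (sub_ne_sub hij) hne
  · intro j
    show pr (y.1 (j + 1 - 1)).1 = pr (y.1 (j - 1)).1 + _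
    rw [show j + 1 - 1 = (j - 1) + 1 from by ring]
    exact hch (j-1)
  · show ∑ j : Fin n, y.2 (j - 1) = _
    rw [show (∑ j : Fin n, y.2 (j - 1)) = ∑ j : Fin n, y.2 j from
      Equiv.sum_comp (Equiv.subRight (1 : Fin n)) y.2]
    exact hsum

lemma shiftP_mem_uE' (m n : ℕ) [NeZero n] (pr : S1 → CircB m)
    (y : (Fin n → S1 × ℝ) × (Fin n → ℝ)) (hy : y ∈ uE' m n pr) :
    shiftP n y ∈ uE' m n pr := by
  obtain ⟨hr, hφ, hdisj, hch, hsum⟩ := hy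
  refine ⟨fun j => hr (j-1), fun j => hφ (j-1), ?_, ?_, ?_⟩
  · intro i j hij
    exact hdisj (i-1) (j-1) (sub_ne_sub hij)
  · intro j
    show pr (y.1 (j + 1 - 1)).1 = pr (y.1 (j - 1)).1 + _
    rw [show j + 1 - 1 = (j - 1) + 1 from by ring]
    exact hch (j-1)
  · show ∑ j : Fin n, y.2 (j - 1) = _
    rw [show (∑ j : Fin n, y.2 (j - 1)) = ∑ j : Fin n, y.2 j from
      Equiv.sum_comp (Equiv.subRight (1 : Fin n)) y.2]
    exact hsum

lemma Hmap_continuous (m n : ℕ) [NeZero n] :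
    Continuous (fun p : ((Fin n → S1 × ℝ) × (Fin n → ℝ)) × ℝ => Hmap m n p.1 p.2) := by
  have hcast : Continuous ((↑·) : ℝ → S1) := AddCircle.continuous_mk' _
  unfold Hmap
  refine Continuous.prodMk (continuous_pi fun j => Continuous.prodMk ?_ ?_)
    (continuous_pi fun j => ?_)
  · refine Continuous.add ?_ (hcast.comp ?_)
    · exact ((continuous_apply j).comp (continuous_fst.comp continuous_fst)).fst
    · unfold oF gF
      have hsumc : Continuous fun p : ((Fin n → S1 × ℝ) × (Fin n → ℝ)) × ℝ =>
          ∑ i : Fin n, (i.val : ℝ) * (cc m / n - p.1.2 (j + i)) := by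
        refine continuous_finset_sum _ fun i _ => Continuous.mul continuous_const ?_
        exact Continuous.sub continuous_const
          ((continuous_apply (j + i)).comp (continuous_snd.comp continuous_fst))
      fun_prop
  · fun_prop
  · fun_prop

end Stmt6

/-- The subspace of `uE^c(n)` where all radii are positive is exactly
`uE′(n)`, and the inclusion `uE′(n) ↪ uE^c(n)` is an equivariant homotopy equivalence:
there are a continuous map `g : uE^c(n) → uE′(n)` and continuous homotopies joining
`g ∘ incl` to the identity of `uE′(n)` and `incl ∘ g` to the identity of `uE^c(n)`, such
that `g` and every time-slice of both homotopies commute with (a) simultaneous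
translations, (b) the cyclic shift of indices, and (c) individual translations by
elements of `ker π`. -/
theorem stmt_6 (m n : ℕ) (hm : 1 ≤ m) (hn : 2 ≤ n) [NeZero n]
    (pr : S1 → CircB m) (hpr : ∀ s : ℝ, pr ((s : ℝ) : S1) = ((s : ℝ) : CircB m)) :
    {y ∈ uEc m n pr | ∀ j, 0 < (y.1 j).2} = uE' m n pr ∧
    ∃ g : ((Fin n → S1 × ℝ) × (Fin n → ℝ)) → ((Fin n → S1 × ℝ) × (Fin n → ℝ)),
    ∃ Hu Hc : (((Fin n → S1 × ℝ) × (Fin n → ℝ)) × ℝ) → (Fin n → S1 × ℝ) × (Fin n → ℝ),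
      Set.MapsTo g (uEc m n pr) (uE' m n pr) ∧
      ContinuousOn g (uEc m n pr) ∧
      ContinuousOn Hu ((uE' m n pr) ×ˢ Icc (0 : ℝ) 1) ∧
      (∀ t ∈ Icc (0 : ℝ) 1, ∀ y ∈ uE' m n pr, Hu (y, t) ∈ uE' m n pr) ∧
      (∀ y ∈ uE' m n pr, Hu (y, 0) = g y ∧ Hu (y, 1) = y) ∧
      ContinuousOn Hc ((uEc m n pr) ×ˢ Icc (0 : ℝ) 1) ∧
      (∀ t ∈ Icc (0 : ℝ) 1, ∀ y ∈ uEc m n pr, Hc (y, t) ∈ uEc m n pr) ∧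
      (∀ y ∈ uEc m n pr, Hc (y, 0) = g y ∧ Hc (y, 1) = y) ∧
      (∀ a : S1,
        Set.MapsTo (transP n a) (uE' m n pr) (uE' m n pr) ∧
        Set.MapsTo (transP n a) (uEc m n pr) (uEc m n pr) ∧
        (∀ y ∈ uEc m n pr, g (transP n a y) = transP n a (g y)) ∧
        (∀ t ∈ Icc (0 : ℝ) 1,
          (∀ y ∈ uE' m n pr, Hu (transP n a y, t) = transP n a (Hu (y, t))) ∧
          (∀ y ∈ uEc m n pr, Hc (transP n a y, t) = transP n a (Hc (y, t))))) ∧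
      (Set.MapsTo (shiftP n) (uE' m n pr) (uE' m n pr) ∧
        Set.MapsTo (shiftP n) (uEc m n pr) (uEc m n pr) ∧
        (∀ y ∈ uEc m n pr, g (shiftP n y) = shiftP n (g y)) ∧
        (∀ t ∈ Icc (0 : ℝ) 1,
          (∀ y ∈ uE' m n pr, Hu (shiftP n y, t) = shiftP n (Hu (y, t))) ∧
          (∀ y ∈ uEc m n pr, Hc (shiftP n y, t) = shiftP n (Hc (y, t))))) ∧
      (∀ k : Fin n → S1, (∀ j, pr (k j) = 0) →
        Set.MapsTo (kerP n k) (uE' m n pr) (uE' m n pr) ∧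
        Set.MapsTo (kerP n k) (uEc m n pr) (uEc m n pr) ∧
        (∀ y ∈ uEc m n pr, g (kerP n k y) = kerP n k (g y)) ∧
        (∀ t ∈ Icc (0 : ℝ) 1,
          (∀ y ∈ uE' m n pr, Hu (kerP n k y, t) = kerP n k (Hu (y, t))) ∧
          (∀ y ∈ uEc m n pr, Hc (kerP n k y, t) = kerP n k (Hc (y, t))))) := by
  constructor
  · exact Stmt6.part1 m n hm hn pr
  · refine ⟨fun y => Stmt6.Hmap m n y 0, fun p => Stmt6.Hmap m n p.1 p.2,
      fun p => Stmt6.Hmap m n p.1 p.2, ?_, ?_, ?_, ?_, ?_, ?_, ?_, ?_, ?_, ?_, ?_⟩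
    · exact fun y hy => Stmt6.Hmap_mem m n hm hn pr hpr y hy le_rfl one_pos
    · exact ((Stmt6.Hmap_continuous m n).comp
        (continuous_id.prodMk continuous_const)).continuousOn
    · exact (Stmt6.Hmap_continuous m n).continuousOn
    · intro t ht y hy
      show Stmt6.Hmap m n y t ∈ uE' m n pr
      rcases eq_or_lt_of_le ht.2 with h1 | h1
      · rw [h1, Stmt6.Hmap_one]; exact hy
      · exact Stmt6.Hmap_mem m n hm hn pr hpr y (Stmt6.uE'_subset m n pr hy) ht.1 h1
    · exact fun y _ => ⟨rfl, Stmt6.Hmap_one m n y⟩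
    · exact (Stmt6.Hmap_continuous m n).continuousOn
    · intro t ht y hy
      show Stmt6.Hmap m n y t ∈ uEc m n pr
      rcases eq_or_lt_of_le ht.2 with h1 | h1
      · rw [h1, Stmt6.Hmap_one]; exact hy
      · exact Stmt6.uE'_subset m n pr (Stmt6.Hmap_mem m n hm hn pr hpr y hy ht.1 h1)
    · exact fun y _ => ⟨rfl, Stmt6.Hmap_one m n y⟩
    · intro a
      exact ⟨fun y hy => Stmt6.addP_mem_uE' m n pr hpr (fun _ => a) (pr a) (fun _ => rfl) y hy,
        fun y hy => Stmt6.addP_mem_uEc m n pr hpr (fun _ => a) (pr a) (fun _ => rfl) y hy,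
        fun y _ => Stmt6.Hmap_transP m n a y 0,
        fun t _ => ⟨fun y _ => Stmt6.Hmap_transP m n a y t,
          fun y _ => Stmt6.Hmap_transP m n a y t⟩⟩
    · exact ⟨fun y hy => Stmt6.shiftP_mem_uE' m n pr y hy,
        fun y hy => Stmt6.shiftP_mem_uEc m n pr y hy,
        fun y _ => Stmt6.Hmap_shiftP m n y 0,
        fun t _ => ⟨fun y _ => Stmt6.Hmap_shiftP m n y t,
          fun y _ => Stmt6.Hmap_shiftP m n y t⟩⟩
    · intro k hk
      exact ⟨fun y hy => Stmt6.addP_mem_uE' m n pr hpr k 0 hk y hy,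
        fun y hy => Stmt6.addP_mem_uEc m n pr hpr k 0 hk y hy,
        fun y _ => Stmt6.Hmap_kerP m n k y 0,
        fun t _ => ⟨fun y _ => Stmt6.Hmap_kerP m n k y t,
          fun y _ => Stmt6.Hmap_kerP m n k y t⟩⟩

end
end

section
/- With the circle setup and for n ≥ 1, let E(n) be the subspace of (S¹ × (0, π/m])^n of tuples x = ((ζ_j, r_j))_j whose arcs A(ζ_j, r_j) are pairwise disjoint, and let uE(n) ⊆ E(n) be the subspace of tuples additionally satisfying δ(π(ζ_i) − π(ζ_0)) < δ(π(ζ_j) − π(ζ_0)) whenever 1 ≤ i < j ≤ n−1. Let Σ_n = Perm(Fin n) act on E(n) by (σ•x)_j = x_{σ⁻¹(j)}, and let Z_n = ⟨α⟩ ⊆ Σ_n be generated by the cyclic permutation α : j ↦ j+1 (mod n). Then: (i) the permutation action of Z_n on (S¹ × (0, π/m])^n preserves uE(n); (ii) the map uE(n) × Σ_n → E(n), (x, σ) ↦ σ•x, is surjective and descends to a homeomorphism (uE(n) × Σ_n)/Z_n → E(n), where γ ∈ Z_n acts on uE(n) × Σ_n by γ·(x, σ) = (γ•x, σγ⁻¹);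 (iii) this homeomorphism is equivariant for the Σ_n-actions (ρ acting on the quotient by ρ·[(x, σ)] = [(x, ρσ)] and on E(n) by ρ•) and commutes with simultaneous translation of all circle coordinates ζ_j by a fixed element of S¹. -/
noncomputable section

open Set

/-- The (finite) symmetric group carries the discrete topology. -/
instance (n : ℕ) : TopologicalSpace (Equiv.Perm (Fin n)) := ⊥

/-- The space `E(n)` of configurations of `n` pairwise disjoint arcs. -/
def En (m n : ℕ) (pr : S1 → CircB m) : Set (Fin n → S1 × ℝ) :=
  {x | (∀ j, (x j).2 ∈ Ioc 0 (Real.pi / m)) ∧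
    ∀ i j, i ≠ j → arcA m pr (x i).1 (x i).2 ∩ arcA m pr (x j).1 (x j).2 = ∅}

/-- The subspace `uE(n) ⊆ E(n)` of cyclically ordered configurations. -/
def uE (m n : ℕ) [NeZero n] (pr : S1 → CircB m) (δ : CircB m → ℝ) :
    Set (Fin n → S1 × ℝ) :=
  {x | x ∈ En m n pr ∧
    ∀ i j : Fin n, 0 < (i : ℕ) → (i : ℕ) < (j : ℕ) →
      δ (pr (x i).1 - pr (x 0).1) < δ (pr (x j).1 - pr (x 0).1)}

/-- The permutation action `(σ • x) j = x (σ⁻¹ j)`. -/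
def permAct (n : ℕ) (σ : Equiv.Perm (Fin n)) (x : Fin n → S1 × ℝ) : Fin n → S1 × ℝ :=
  fun j => x (σ⁻¹ j)

/-- Simultaneous translation of all circle coordinates by `a ∈ S¹`. -/
def transX (n : ℕ) (a : S1) (x : Fin n → S1 × ℝ) : Fin n → S1 × ℝ :=
  fun j => ((x j).1 + a, (x j).2)

/-- The relation defining the balanced product `uE(n) ×_{Z_n} Σ_n`:
`γ · (x, σ) = (γ • x, σ γ⁻¹)` for `γ` in the cyclic group `Z_n = ⟨(1 ⋯ n)⟩`. -/
def balRel (m n : ℕ) [NeZero n] (pr : S1 → CircB m) (δ : CircB m → ℝ) :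
    (↥(uE m n pr δ) × Equiv.Perm (Fin n)) → (↥(uE m n pr δ) × Equiv.Perm (Fin n)) → Prop :=
  fun p p' => ∃ γ ∈ Subgroup.zpowers (finRotate n),
    (p'.1 : Fin n → S1 × ℝ) = permAct n γ (p.1 : Fin n → S1 × ℝ) ∧ p'.2 = p.2 * γ⁻¹

namespace Stmt15

lemma c_pos {m : ℕ} (hm : 1 ≤ m) : 0 < 2 * Real.pi / m :=
  div_pos (by positivity) (by exact_mod_cast hm)

lemma coe_injOn {m : ℕ} (hm : 1 ≤ m) {a b : ℝ}
    (ha : a ∈ Ioc 0 (2 * Real.pi / m)) (hb : b ∈ Ioc 0 (2 * Real.pi / m))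
    (h : ((a : ℝ) : CircB m) = ((b : ℝ) : CircB m)) : a = b := by
  have hc := c_pos hm
  have h0 : ((a - b : ℝ) : CircB m) = 0 := by
    rw [AddCircle.coe_sub, h, sub_self]
  obtain ⟨k, hk⟩ := (AddCircle.coe_eq_zero_iff _).1 h0
  have h1 : (k : ℝ) * (2 * Real.pi / m) = a - b := by
    simpa [zsmul_eq_mul] using hk
  have hlt : |a - b| < 2 * Real.pi / m := by
    rw [abs_lt]
    constructor <;> nlinarith [ha.1, ha.2, hb.1, hb.2]
  have hk1 : |(k : ℝ)| < 1 := by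
    rw [← h1, abs_mul, abs_of_pos hc] at hlt
    nlinarith [abs_nonneg (k : ℝ)]
  have hk0 : k = 0 := by
    have h2 : |k| < 1 := by
      have : ((|k| : ℤ) : ℝ) < 1 := by rw [Int.cast_abs]; exact hk1
      exact_mod_cast this
    rw [abs_lt] at h2
    omega
  rw [hk0] at h1
  simp at h1
  linarith

section Delta

variable {m : ℕ} {δ : CircB m → ℝ}

lemma delta_coe (hm : 1 ≤ m)
    (hδ : ∀ z : CircB m, δ z ∈ Ioc 0 (2 * Real.pi / m) ∧ ((δ z : ℝ) : CircB m) = z)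
    {s : ℝ} (hs : s ∈ Ioc 0 (2 * Real.pi / m)) : δ ((s : ℝ) : CircB m) = s :=
  coe_injOn hm (hδ _).1 hs (hδ _).2

lemma delta_zero (hm : 1 ≤ m)
    (hδ : ∀ z : CircB m, δ z ∈ Ioc 0 (2 * Real.pi / m) ∧ ((δ z : ℝ) : CircB m) = z) :
    δ (0 : CircB m) = 2 * Real.pi / m := by
  have h : ((2 * Real.pi / m : ℝ) : CircB m) = 0 := AddCircle.coe_period (2 * Real.pi / m)
  rw [← h, delta_coe hm hδ ⟨c_pos hm, le_refl _⟩]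

lemma delta_inj
    (hδ : ∀ z : CircB m, δ z ∈ Ioc 0 (2 * Real.pi / m) ∧ ((δ z : ℝ) : CircB m) = z)
    {z w : CircB m} (h : δ z = δ w) : z = w := by
  rw [← (hδ z).2, ← (hδ w).2, h]

lemma delta_lt_c (hm : 1 ≤ m)
    (hδ : ∀ z : CircB m, δ z ∈ Ioc 0 (2 * Real.pi / m) ∧ ((δ z : ℝ) : CircB m) = z)
    {w : CircB m} (hw : w ≠ 0) : δ w < 2 * Real.pi / m :=
  lt_of_le_of_ne (hδ w).1.2 fun h =>
    hw (delta_inj hδ (h.trans (delta_zero hm hδ).symm))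

lemma delta_coe_sub_lt (hm : 1 ≤ m)
    (hδ : ∀ z : CircB m, δ z ∈ Ioc 0 (2 * Real.pi / m) ∧ ((δ z : ℝ) : CircB m) = z)
    {a b : ℝ} (ha : a ∈ Ioc 0 (2 * Real.pi / m)) (hb : b ∈ Ioc 0 (2 * Real.pi / m))
    (h : b < a) : δ (((a : ℝ) : CircB m) - ((b : ℝ) : CircB m)) = a - b := by
  rw [← AddCircle.coe_sub]
  exact delta_coe hm hδ ⟨sub_pos.2 h, by linarith [ha.2, hb.1]⟩

lemma delta_coe_sub_le (hm : 1 ≤ m)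
    (hδ : ∀ z : CircB m, δ z ∈ Ioc 0 (2 * Real.pi / m) ∧ ((δ z : ℝ) : CircB m) = z)
    {a b : ℝ} (ha : a ∈ Ioc 0 (2 * Real.pi / m)) (hb : b ∈ Ioc 0 (2 * Real.pi / m))
    (h : a ≤ b) :
    δ (((a : ℝ) : CircB m) - ((b : ℝ) : CircB m)) = a - b + 2 * Real.pi / m := by
  rw [← AddCircle.coe_sub, show ((a - b : ℝ) : CircB m) = ((a - b + 2 * Real.pi / m : ℝ) : CircB m) from
    (AddCircle.coe_add_period _ _).symm]
  exact delta_coe hm hδ ⟨by linarith [ha.1, hb.2], by linarith⟩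

end Delta

/-- "σ presents z in counterclockwise cyclic order from `σ 0`". -/
def Srt {m : ℕ} (δ : CircB m → ℝ) {n : ℕ} [NeZero n] (z : Fin n → CircB m) (σ : Equiv.Perm (Fin n)) : Prop :=
  ∀ i j : Fin n, 0 < (i : ℕ) → (i : ℕ) < (j : ℕ) →
    δ (z (σ i) - z (σ 0)) < δ (z (σ j) - z (σ 0))


section Comb

variable {m : ℕ} {δ : CircB m → ℝ} {n : ℕ} {z : Fin (n + 1) → CircB m}

lemma val_one_eq (hn : 1 ≤ n) : ((1 : Fin (n + 1)) : ℕ) = 1 := by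
  rw [Fin.val_one', Nat.mod_eq_of_lt (by omega)]

lemma fin_add_one_val {i : Fin (n + 1)} (h : (i : ℕ) < n) :
    ((i + 1 : Fin (n + 1)) : ℕ) = (i : ℕ) + 1 :=
  Fin.val_add_one_of_lt (by rw [Fin.lt_def, Fin.val_last]; exact h)

lemma fin_eq_zero_of_val {j : Fin (n + 1)} (h : (j : ℕ) = n) : j + 1 = 0 := by
  have : j = Fin.last n := Fin.ext (by rw [Fin.val_last]; exact h)
  rw [this, Fin.last_add_one]

lemma srt_mul_finRotate (hm : 1 ≤ m)
    (hδ : ∀ w : CircB m, δ w ∈ Ioc 0 (2 * Real.pi / m) ∧ ((δ w : ℝ) : CircB m) = w)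
    (hz : Function.Injective z) {σ : Equiv.Perm (Fin (n + 1))} (hσ : Srt δ z σ) :
    Srt δ z (σ * finRotate (n + 1)) := by
  intro i j hi hij
  have hjn : (j : ℕ) < n + 1 := j.isLt
  have hn : 2 ≤ n := by omega
  have h1v : ((1 : Fin (n + 1)) : ℕ) = 1 := val_one_eq (by omega)
  set a : Fin (n + 1) → ℝ := fun q => δ (z (σ q) - z (σ 0)) with ha
  have haIoc : ∀ q, a q ∈ Ioc 0 (2 * Real.pi / m) := fun q => (hδ _).1
  have hacoe : ∀ q, ((a q : ℝ) : CircB m) = z (σ q) - z (σ 0) := fun q => (hδ _).2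
  have ha0 : a 0 = 2 * Real.pi / m := by
    have : z (σ 0) - z (σ 0) = 0 := sub_self _
    rw [ha]; dsimp only; rw [this]; exact delta_zero hm hδ
  have haltc : ∀ q, q ≠ (0 : Fin (n + 1)) → a q < 2 * Real.pi / m := by
    intro q hq
    exact delta_lt_c hm hδ (sub_ne_zero.2 (hz.ne (σ.injective.ne hq)))
  have hsub : ∀ p q : Fin (n + 1),
      z (σ p) - z (σ q) = (((a p - a q : ℝ)) : CircB m) := by
    intro p q
    rw [AddCircle.coe_sub, hacoe, hacoe]
    abel
  have happ : ∀ q : Fin (n + 1), (σ * finRotate (n + 1)) q = σ (q + 1) := fun q => by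
    rw [Equiv.Perm.mul_apply, finRotate_succ_apply]
  rw [happ, happ, happ, zero_add]
  -- facts about i + 1
  have hi1 : ((i + 1 : Fin (n + 1)) : ℕ) = (i : ℕ) + 1 := fin_add_one_val (by omega)
  have hi1ne : (i + 1 : Fin (n + 1)) ≠ 0 := by
    intro h; rw [h, Fin.val_zero] at hi1; omega
  have h1ne : (1 : Fin (n + 1)) ≠ 0 := by
    intro h; rw [h, Fin.val_zero] at h1v; omega
  have h1ltai1 : a 1 < a (i + 1) := hσ 1 (i + 1) (by omega) (by omega)
  have hLHS : δ (z (σ (i + 1)) - z (σ 1)) = a (i + 1) - a 1 := by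
    rw [hsub]
    exact delta_coe_sub_lt hm hδ (haIoc _) (haIoc _) h1ltai1
  by_cases hjl : (j : ℕ) = n
  · rw [fin_eq_zero_of_val hjl]
    have h1ltc : a 1 < a 0 := by rw [ha0]; exact haltc 1 h1ne
    have hRHS : δ (z (σ 0) - z (σ 1)) = a 0 - a 1 := by
      rw [hsub]
      exact delta_coe_sub_lt hm hδ (haIoc _) (haIoc _) h1ltc
    rw [hLHS, hRHS, ha0]
    have := haltc (i + 1) hi1ne
    linarith
  · have hj1 : ((j + 1 : Fin (n + 1)) : ℕ) = (j : ℕ) + 1 := fin_add_one_val (by omega)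
    have h1ltaj1 : a 1 < a (j + 1) := hσ 1 (j + 1) (by omega) (by omega)
    have hRHS : δ (z (σ (j + 1)) - z (σ 1)) = a (j + 1) - a 1 := by
      rw [hsub]
      exact delta_coe_sub_lt hm hδ (haIoc _) (haIoc _) h1ltaj1
    rw [hLHS, hRHS]
    have : a (i + 1) < a (j + 1) := hσ (i + 1) (j + 1) (by omega) (by omega)
    linarith

lemma srt_mul_pow (hm : 1 ≤ m)
    (hδ : ∀ w : CircB m, δ w ∈ Ioc 0 (2 * Real.pi / m) ∧ ((δ w : ℝ) : CircB m) = w)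
    (hz : Function.Injective z) {σ : Equiv.Perm (Fin (n + 1))} (hσ : Srt δ z σ) (k : ℕ) :
    Srt δ z (σ * (finRotate (n + 1)) ^ k) := by
  induction k with
  | zero => simpa using hσ
  | succ k ih =>
    rw [pow_succ, ← mul_assoc]
    exact srt_mul_finRotate hm hδ hz ih

lemma srt_strictMono (hm : 1 ≤ m)
    (hδ : ∀ w : CircB m, δ w ∈ Ioc 0 (2 * Real.pi / m) ∧ ((δ w : ℝ) : CircB m) = w)
    (hz : Function.Injective z) {σ : Equiv.Perm (Fin (n + 1))} (hσ : Srt δ z σ) :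
    StrictMono (fun k : Fin (n + 1) => δ (z (σ (k + 1)) - z (σ 0))) := by
  intro k l hkl
  have hkv : (k : ℕ) < (l : ℕ) := hkl
  have hlv : (l : ℕ) < n + 1 := l.isLt
  have hk1 : ((k + 1 : Fin (n + 1)) : ℕ) = (k : ℕ) + 1 := fin_add_one_val (by omega)
  have hk1ne : (k + 1 : Fin (n + 1)) ≠ 0 := by
    intro h; rw [h, Fin.val_zero] at hk1; omega
  by_cases hl : (l : ℕ) = n
  · show δ (z (σ (k + 1)) - z (σ 0)) < δ (z (σ (l + 1)) - z (σ 0))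
    rw [fin_eq_zero_of_val hl, sub_self, delta_zero hm hδ]
    exact delta_lt_c hm hδ (sub_ne_zero.2 (hz.ne (σ.injective.ne hk1ne)))
  · have hl1 : ((l + 1 : Fin (n + 1)) : ℕ) = (l : ℕ) + 1 := fin_add_one_val (by omega)
    exact hσ (k + 1) (l + 1) (by omega) (by omega)

lemma srt_unique (hm : 1 ≤ m)
    (hδ : ∀ w : CircB m, δ w ∈ Ioc 0 (2 * Real.pi / m) ∧ ((δ w : ℝ) : CircB m) = w)
    (hz : Function.Injective z) {σ τ : Equiv.Perm (Fin (n + 1))}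
    (hσ : Srt δ z σ) (hτ : Srt δ z τ) (h0 : σ 0 = τ 0) : σ = τ := by
  haveI : WellFoundedLT (Fin (n + 1)) := Finite.to_wellFoundedLT
  have hFm : StrictMono (fun k : Fin (n + 1) => δ (z (σ (k + 1)) - z (σ 0))) :=
    srt_strictMono hm hδ hz hσ
  have hGm : StrictMono (fun k : Fin (n + 1) => δ (z (τ (k + 1)) - z (σ 0))) := by
    rw [h0]; exact srt_strictMono hm hδ hz hτ
  have hsurjσ : Function.Surjective (fun k : Fin (n + 1) => σ (k + 1)) := by
    intro w; exact ⟨σ.symm w - 1, by simp⟩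
  have hsurjτ : Function.Surjective (fun k : Fin (n + 1) => τ (k + 1)) := by
    intro w; exact ⟨τ.symm w - 1, by simp⟩
  have hrange : Set.range (fun k : Fin (n + 1) => δ (z (σ (k + 1)) - z (σ 0)))
      = Set.range (fun k : Fin (n + 1) => δ (z (τ (k + 1)) - z (σ 0))) := by
    have e1 : (fun k : Fin (n + 1) => δ (z (σ (k + 1)) - z (σ 0)))
        = (fun w => δ (z w - z (σ 0))) ∘ (fun k : Fin (n + 1) => σ (k + 1)) := rfl
    have e2 : (fun k : Fin (n + 1) => δ (z (τ (k + 1)) - z (σ 0)))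
        = (fun w => δ (z w - z (σ 0))) ∘ (fun k : Fin (n + 1) => τ (k + 1)) := rfl
    rw [e1, e2, Set.range_comp, Set.range_comp, hsurjσ.range_eq, hsurjτ.range_eq]
  have hFG := (StrictMono.range_inj hFm hGm).1 hrange
  have key : ∀ k : Fin (n + 1), σ (k + 1) = τ (k + 1) := by
    intro k
    have := congrFun hFG k
    have h2 := delta_inj hδ this
    have h3 : z (σ (k + 1)) = z (τ (k + 1)) := by
      have := sub_left_inj.1 h2
      exact this
    exact hz h3
  refine Equiv.ext fun w => ?_
  have := key (w - 1)
  rwa [sub_add_cancel] at this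

lemma srt_exists (hm : 1 ≤ m)
    (hδ : ∀ w : CircB m, δ w ∈ Ioc 0 (2 * Real.pi / m) ∧ ((δ w : ℝ) : CircB m) = w)
    (hz : Function.Injective z) (b : Fin (n + 1)) :
    ∃ σ : Equiv.Perm (Fin (n + 1)), Srt δ z σ ∧ σ 0 = b := by
  classical
  set f : Fin (n + 1) → ℝ := fun j => if j = b then 0 else δ (z j - z b) with hf
  have hpos : ∀ j, j ≠ b → 0 < f j := by
    intro j hj; rw [hf]; simp only [if_neg hj]; exact (hδ _).1.1
  have hfb : f b = 0 := by rw [hf]; simp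
  have hfinj : Function.Injective f := by
    intro u v huv
    by_cases hu : u = b <;> by_cases hv : v = b
    · rw [hu, hv]
    · exact absurd (huv.symm.trans (hu ▸ hfb)) (ne_of_gt (hpos v hv))
    · exact absurd (huv.trans (hv ▸ hfb)) (ne_of_gt (hpos u hu))
    · rw [hf] at huv
      simp only [if_neg hu, if_neg hv] at huv
      have := delta_inj hδ huv
      exact hz (sub_left_inj.1 this)
  set σ := Tuple.sort f with hσdef
  have hmono : StrictMono (f ∘ σ) :=
    (Tuple.monotone_sort f).strictMono_of_injective (hfinj.comp σ.injective)
  have hσ0 : σ 0 = b := by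
    by_contra hne
    have h1 : (f ∘ σ) 0 ≤ (f ∘ σ) (σ⁻¹ b) := (Tuple.monotone_sort f) (Fin.zero_le _)
    have h2 : (f ∘ σ) (σ⁻¹ b) = 0 := by
      simp only [Function.comp_apply, ← Equiv.Perm.mul_apply, mul_inv_cancel, Equiv.Perm.one_apply, hfb]
    have h3 : 0 < (f ∘ σ) 0 := hpos _ hne
    rw [h2] at h1
    linarith
  refine ⟨σ, ?_, hσ0⟩
  intro i j hi hij
  have hσi : σ i ≠ b := by
    intro h
    rw [← hσ0] at h
    have hi0 : i = 0 := σ.injective h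
    rw [hi0, Fin.val_zero] at hi
    omega
  have hσj : σ j ≠ b := by
    intro h
    rw [← hσ0] at h
    have hj0 : j = 0 := σ.injective h
    rw [hj0, Fin.val_zero] at hij
    omega
  have hlt := hmono (show i < j from Fin.lt_def.2 hij)
  simp only [Function.comp_apply, hf, if_neg hσi, if_neg hσj] at hlt
  rw [hσ0]
  exact hlt

open Fin.NatCast in
lemma pow_finRotate_apply (k : ℕ) (j : Fin (n + 1)) :
    ((finRotate (n + 1)) ^ k) j = j + (k : Fin (n + 1)) := by
  induction k generalizing j with
  | zero => simp
  | succ k ih =>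
    rw [pow_succ, Equiv.Perm.mul_apply, finRotate_succ_apply, ih (j + 1)]
    push_cast
    abel

lemma srt_coset (hm : 1 ≤ m)
    (hδ : ∀ w : CircB m, δ w ∈ Ioc 0 (2 * Real.pi / m) ∧ ((δ w : ℝ) : CircB m) = w)
    (hz : Function.Injective z) {σ τ : Equiv.Perm (Fin (n + 1))}
    (hσ : Srt δ z σ) (hτ : Srt δ z τ) :
    ∃ k : ℕ, τ = σ * (finRotate (n + 1)) ^ k := by
  refine ⟨(σ.symm (τ 0)).val, ?_⟩
  have h1 : Srt δ z (σ * (finRotate (n + 1)) ^ (σ.symm (τ 0)).val) :=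
    srt_mul_pow hm hδ hz hσ _
  refine (srt_unique hm hδ hz h1 hτ ?_).symm
  rw [Equiv.Perm.mul_apply, pow_finRotate_apply, zero_add, Fin.cast_val_eq_self,
    Equiv.apply_symm_apply]

end Comb

section Config

variable {m n : ℕ} {pr : S1 → CircB m} {δ : CircB m → ℝ}

lemma mem_arc_self (ζ : S1) (r : ℝ) : pr ζ ∈ arcA m pr ζ r := mem_insert _ _

lemma En_center_inj {x : Fin n → S1 × ℝ} (hx : x ∈ En m n pr) :
    Function.Injective fun j => pr (x j).1 := by
  intro i j h
  change pr (x i).1 = pr (x j).1 at h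
  by_contra hne
  have h2 := hx.2 i j hne
  rw [eq_empty_iff_forall_notMem] at h2
  refine h2 (pr (x i).1) ⟨mem_arc_self _ _, ?_⟩
  rw [h]
  exact mem_arc_self _ _

lemma permAct_mul (σ τ : Equiv.Perm (Fin n)) (x : Fin n → S1 × ℝ) :
    permAct n σ (permAct n τ x) = permAct n (σ * τ) x := by
  funext j
  simp [permAct, mul_inv_rev, Equiv.Perm.mul_apply]

lemma permAct_one (x : Fin n → S1 × ℝ) : permAct n 1 x = x := by
  funext j
  simp [permAct]

lemma permAct_mem_En (σ : Equiv.Perm (Fin n)) {x : Fin n → S1 × ℝ} (hx : x ∈ En m n pr) :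
    permAct n σ x ∈ En m n pr :=
  ⟨fun j => hx.1 _, fun i j hij => hx.2 _ _ fun h => hij (Equiv.injective _ h)⟩

lemma uE_iff [NeZero n] (y : Fin n → S1 × ℝ) (σ : Equiv.Perm (Fin n)) (hy : y ∈ En m n pr) :
    permAct n σ⁻¹ y ∈ uE m n pr δ ↔ Srt δ (fun j => pr (y j).1) σ := by
  have key : ∀ i, permAct n σ⁻¹ y i = y (σ i) := fun i => by simp [permAct]
  constructor
  · rintro ⟨h1, h2⟩ i j hi hij
    have := h2 i j hi hij
    simp only [key] at this
    simpa only using this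
  · intro h
    refine ⟨permAct_mem_En σ⁻¹ hy, fun i j hi hij => ?_⟩
    have := h i j hi hij
    simp only [key]
    simpa only using this

lemma pr_continuous (hpr : ∀ s : ℝ, pr ((s : ℝ) : S1) = ((s : ℝ) : CircB m)) :
    Continuous pr := by
  have h := QuotientAddGroup.isQuotientMap_mk (AddSubgroup.zmultiples (2 * Real.pi))
  rw [h.continuous_iff]
  have heq : (pr ∘ (QuotientAddGroup.mk : ℝ → S1)) = fun s : ℝ => ((s : ℝ) : CircB m) :=
    funext hpr
  rw [heq]
  exact AddCircle.continuous_mk' _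

lemma pr_add (hpr : ∀ s : ℝ, pr ((s : ℝ) : S1) = ((s : ℝ) : CircB m)) (u v : S1) :
    pr (u + v) = pr u + pr v := by
  obtain ⟨s, rfl⟩ : ∃ s : ℝ, ((s : ℝ) : S1) = u := Quotient.exists_rep u
  obtain ⟨t, rfl⟩ : ∃ t : ℝ, ((t : ℝ) : S1) = v := Quotient.exists_rep v
  rw [← AddCircle.coe_add, hpr, hpr, hpr, AddCircle.coe_add]

lemma delta_continuousAt (hm : 1 ≤ m)
    (hδ : ∀ z : CircB m, δ z ∈ Ioc 0 (2 * Real.pi / m) ∧ ((δ z : ℝ) : CircB m) = z)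
    {w : CircB m} (hw : w ≠ 0) : ContinuousAt δ w := by
  haveI : Fact (0 < 2 * Real.pi / m) := ⟨c_pos hm⟩
  have heq : δ = fun z => ((AddCircle.equivIoc (2 * Real.pi / m) 0 z : ℝ)) := by
    funext z
    refine coe_injOn hm (hδ z).1 ?_ ?_
    · have := (AddCircle.equivIoc (2 * Real.pi / m) 0 z).2
      simpa using this
    · rw [(hδ z).2]
      exact ((AddCircle.equivIoc _ 0).symm_apply_apply z).symm
  rw [heq]
  exact continuous_subtype_val.continuousAt.comp
    (AddCircle.continuousAt_equivIoc (2 * Real.pi / m) 0 (by simpa using hw))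

lemma isOpen_uE [NeZero n] (hm : 1 ≤ m)
    (hpr : ∀ s : ℝ, pr ((s : ℝ) : S1) = ((s : ℝ) : CircB m))
    (hδ : ∀ z : CircB m, δ z ∈ Ioc 0 (2 * Real.pi / m) ∧ ((δ z : ℝ) : CircB m) = z) :
    IsOpen {x : ↥(En m n pr) | (x : Fin n → S1 × ℝ) ∈ uE m n pr δ} := by
  have hcont : ∀ k : Fin n, k ≠ 0 → Continuous fun x : ↥(En m n pr) =>
      δ (pr ((x : Fin n → S1 × ℝ) k).1 - pr ((x : Fin n → S1 × ℝ) 0).1) := by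
    intro k hk
    rw [continuous_iff_continuousAt]
    intro x
    have hinner : Continuous fun x : ↥(En m n pr) =>
        pr ((x : Fin n → S1 × ℝ) k).1 - pr ((x : Fin n → S1 × ℝ) 0).1 :=
      Continuous.sub
        ((pr_continuous hpr).comp ((continuous_apply k).comp continuous_subtype_val).fst)
        ((pr_continuous hpr).comp ((continuous_apply 0).comp continuous_subtype_val).fst)
    exact ContinuousAt.comp
      (delta_continuousAt hm hδ (sub_ne_zero.2 ((En_center_inj x.2).ne hk)))
      hinner.continuousAt
  have hset : {x : ↥(En m n pr) | (x : Fin n → S1 × ℝ) ∈ uE m n pr δ}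
      = ⋂ i : Fin n, ⋂ j : Fin n,
        {x : ↥(En m n pr) | 0 < (i : ℕ) → (i : ℕ) < (j : ℕ) →
          δ (pr ((x : Fin n → S1 × ℝ) i).1 - pr ((x : Fin n → S1 × ℝ) 0).1)
            < δ (pr ((x : Fin n → S1 × ℝ) j).1 - pr ((x : Fin n → S1 × ℝ) 0).1)} := by
    ext x
    simp only [mem_iInter, mem_setOf_eq]
    exact ⟨fun h i j => h.2 i j, fun h => ⟨x.2, h⟩⟩
  rw [hset]
  refine isOpen_iInter_of_finite fun i => isOpen_iInter_of_finite fun j => ?_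
  by_cases hij : 0 < (i : ℕ) ∧ (i : ℕ) < (j : ℕ)
  · have hne_i : i ≠ 0 := by
      intro h; rw [h, Fin.val_zero] at hij; omega
    have hne_j : j ≠ 0 := by
      intro h; rw [h, Fin.val_zero] at hij; omega
    have heq : {x : ↥(En m n pr) | 0 < (i : ℕ) → (i : ℕ) < (j : ℕ) →
          δ (pr ((x : Fin n → S1 × ℝ) i).1 - pr ((x : Fin n → S1 × ℝ) 0).1)
            < δ (pr ((x : Fin n → S1 × ℝ) j).1 - pr ((x : Fin n → S1 × ℝ) 0).1)}
        = {x : ↥(En m n pr) |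
            δ (pr ((x : Fin n → S1 × ℝ) i).1 - pr ((x : Fin n → S1 × ℝ) 0).1)
            < δ (pr ((x : Fin n → S1 × ℝ) j).1 - pr ((x : Fin n → S1 × ℝ) 0).1)} := by
      ext x
      simp only [mem_setOf_eq]
      exact ⟨fun h => h hij.1 hij.2, fun h _ _ => h⟩
    rw [heq]
    exact isOpen_lt (hcont i hne_i) (hcont j hne_j)
  · have heq : {x : ↥(En m n pr) | 0 < (i : ℕ) → (i : ℕ) < (j : ℕ) →
          δ (pr ((x : Fin n → S1 × ℝ) i).1 - pr ((x : Fin n → S1 × ℝ) 0).1)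
            < δ (pr ((x : Fin n → S1 × ℝ) j).1 - pr ((x : Fin n → S1 × ℝ) 0).1)}
        = univ := by
      ext x
      simp only [mem_setOf_eq, mem_univ, iff_true]
      intro h1 h2
      exact absurd ⟨h1, h2⟩ hij
    rw [heq]
    exact isOpen_univ

lemma mem_arc_translate (hpr : ∀ s : ℝ, pr ((s : ℝ) : S1) = ((s : ℝ) : CircB m))
    (a : S1) (ζ : S1) (r : ℝ) (w : CircB m) :
    w ∈ arcA m pr (ζ + a) r ↔ w - pr a ∈ arcA m pr ζ r := by
  have hadd : pr (ζ + a) = pr ζ + pr a := pr_add hpr ζ a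
  simp only [arcA, mem_insert_iff, mem_setOf_eq, hadd]
  constructor
  · rintro (h | ⟨s, hs, rfl⟩)
    · left; rw [h, add_sub_cancel_right]
    · right; exact ⟨s, hs, by abel⟩
  · rintro (h | ⟨s, hs, h⟩)
    · left; rw [← h, sub_add_cancel]
    · right
      refine ⟨s, hs, ?_⟩
      have h2 := sub_eq_iff_eq_add.1 h
      rw [h2]; abel

lemma transX_mem_En (hpr : ∀ s : ℝ, pr ((s : ℝ) : S1) = ((s : ℝ) : CircB m))
    (a : S1) {x : Fin n → S1 × ℝ} (hx : x ∈ En m n pr) : transX n a x ∈ En m n pr := by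
  refine ⟨fun j => hx.1 j, fun i j hij => ?_⟩
  rw [eq_empty_iff_forall_notMem]
  rintro w ⟨hwi, hwj⟩
  have h2 := hx.2 i j hij
  rw [eq_empty_iff_forall_notMem] at h2
  exact h2 (w - pr a)
    ⟨(mem_arc_translate hpr a _ _ _).1 hwi, (mem_arc_translate hpr a _ _ _).1 hwj⟩

lemma transX_mem_uE [NeZero n] (hpr : ∀ s : ℝ, pr ((s : ℝ) : S1) = ((s : ℝ) : CircB m))
    (a : S1) {x : Fin n → S1 × ℝ} (hx : x ∈ uE m n pr δ) : transX n a x ∈ uE m n pr δ := by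
  refine ⟨transX_mem_En hpr a hx.1, fun i j hi hij => ?_⟩
  have key : ∀ k, pr ((transX n a x k).1) - pr ((transX n a x 0).1)
      = pr ((x k).1) - pr ((x 0).1) := by
    intro k
    show pr ((x k).1 + a) - pr ((x 0).1 + a) = _
    rw [pr_add hpr, pr_add hpr]
    abel
  rw [key, key]
  exact hx.2 i j hi hij


variable (m n) in
/-- The balanced-product structure map `(x, σ) ↦ σ • x`. -/
def Phi [NeZero n] (pr' : S1 → CircB m) (δ' : CircB m → ℝ) :
    ↥(uE m n pr' δ') × Equiv.Perm (Fin n) → ↥(En m n pr') :=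
  fun p => ⟨permAct n p.2 p.1.val, permAct_mem_En p.2 p.1.2.1⟩

variable (m n) in
lemma Phi_resp [NeZero n] (pr' : S1 → CircB m) (δ' : CircB m → ℝ) :
    ∀ p p', balRel m n pr' δ' p p' → Phi m n pr' δ' p = Phi m n pr' δ' p' := by
  rintro p p' ⟨γ, hγ, h1, h2⟩
  apply Subtype.ext
  show permAct n p.2 p.1.val = permAct n p'.2 p'.1.val
  rw [h1, h2, permAct_mul, inv_mul_cancel_right]

variable (m n) in
/-- The descent of `Phi` to the balanced product. -/
def PhiQ [NeZero n] (pr' : S1 → CircB m) (δ' : CircB m → ℝ) :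
    Quot (balRel m n pr' δ') → ↥(En m n pr') :=
  Quot.lift (Phi m n pr' δ') (Phi_resp m n pr' δ')

lemma PhiQ_mk [NeZero n] (pr' : S1 → CircB m) (δ' : CircB m → ℝ) (p) :
    PhiQ m n pr' δ' (Quot.mk _ p) = Phi m n pr' δ' p := rfl

end Config



end Stmt15

open Stmt15 in
/-- (i) The cyclic group `Z_n = ⟨(1 ⋯ n)⟩ ≤ Σ_n` preserves `uE(n)`;
(ii) the map `(x, σ) ↦ σ • x` from `uE(n) × Σ_n` onto `E(n)` is surjective and descends
to a homeomorphism from the balanced product `(uE(n) × Σ_n)/Z_n` to `E(n)`;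
(iii) this homeomorphism is `Σ_n`-equivariant and commutes with simultaneous translation
of the circle coordinates. -/
theorem stmt_15 (m n : ℕ) (hm : 1 ≤ m) (hn : 1 ≤ n) [NeZero n]
    (pr : S1 → CircB m) (hpr : ∀ s : ℝ, pr ((s : ℝ) : S1) = ((s : ℝ) : CircB m))
    (δ : CircB m → ℝ)
    (hδ : ∀ z : CircB m, δ z ∈ Ioc 0 (2 * Real.pi / m) ∧ ((δ z : ℝ) : CircB m) = z) :
    -- (i)
    (∀ γ ∈ Subgroup.zpowers (finRotate n),
      Set.MapsTo (permAct n γ) (uE m n pr δ) (uE m n pr δ)) ∧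
    -- (ii) and (iii)
    (∀ y ∈ En m n pr, ∃ x ∈ uE m n pr δ, ∃ σ : Equiv.Perm (Fin n), permAct n σ x = y) ∧
    ∃ e : Quot (balRel m n pr δ) ≃ₜ ↥(En m n pr),
      (∀ (x : ↥(uE m n pr δ)) (σ : Equiv.Perm (Fin n)),
        (e (Quot.mk _ (x, σ))).val = permAct n σ x.val) ∧
      (∀ (ρ : Equiv.Perm (Fin n)) (x : ↥(uE m n pr δ)) (σ : Equiv.Perm (Fin n)),
        (e (Quot.mk _ (x, ρ * σ))).val = permAct n ρ (e (Quot.mk _ (x, σ))).val) ∧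
      (∀ a : S1, Set.MapsTo (transX n a) (uE m n pr δ) (uE m n pr δ) ∧
        Set.MapsTo (transX n a) (En m n pr) (En m n pr) ∧
        ∀ (x : ↥(uE m n pr δ)) (hx : transX n a x.val ∈ uE m n pr δ)
          (σ : Equiv.Perm (Fin n)),
          (e (Quot.mk _ (⟨transX n a x.val, hx⟩, σ))).val =
            transX n a (e (Quot.mk _ (x, σ))).val) := by
  obtain ⟨n, rfl⟩ : ∃ k, n = k + 1 := ⟨n - 1, by omega⟩
  -- (i)
  have part1 : ∀ γ ∈ Subgroup.zpowers (finRotate (n + 1)),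
      Set.MapsTo (permAct (n + 1) γ) (uE m (n + 1) pr δ) (uE m (n + 1) pr δ) := by
    intro γ hγ x hx
    obtain ⟨k, hk⟩ : ∃ k : ℕ, (finRotate (n + 1)) ^ k = γ⁻¹ := by
      have h1 : γ⁻¹ ∈ Subgroup.zpowers (finRotate (n + 1)) := Subgroup.inv_mem _ hγ
      have h2 := (IsOfFinOrder.mem_powers_iff_mem_zpowers (isOfFinOrder_of_finite _)).2 h1
      exact (Submonoid.mem_powers_iff _ _).1 h2
    have hzinj : Function.Injective fun j => pr (x j).1 := En_center_inj hx.1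
    have hSrt1 : Srt δ (fun j => pr (x j).1) 1 := by
      intro i j hi hij
      have := hx.2 i j hi hij
      simpa using this
    have hSrtk : Srt δ (fun j => pr (x j).1) ((finRotate (n + 1)) ^ k) := by
      have := srt_mul_pow hm hδ hzinj hSrt1 k
      rwa [one_mul] at this
    have hγ' : γ = ((finRotate (n + 1)) ^ k)⁻¹ := by rw [hk, inv_inv]
    rw [hγ']
    exact (uE_iff x _ hx.1).2 hSrtk
  -- (ii) surjectivity
  have part2 : ∀ y ∈ En m (n + 1) pr, ∃ x ∈ uE m (n + 1) pr δ,
      ∃ σ : Equiv.Perm (Fin (n + 1)), permAct (n + 1) σ x = y := by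
    intro y hy
    obtain ⟨σ, hσ, -⟩ := srt_exists hm hδ (En_center_inj hy) 0
    refine ⟨permAct (n + 1) σ⁻¹ y, (uE_iff y σ hy).2 hσ, σ, ?_⟩
    rw [permAct_mul, mul_inv_cancel, permAct_one]
  haveI : DiscreteTopology (Equiv.Perm (Fin (n + 1))) := ⟨rfl⟩
  have hsurj : Function.Surjective (PhiQ m (n + 1) pr δ) := by
    intro y
    obtain ⟨x, hx, σ, hxy⟩ := part2 y.val y.2
    refine ⟨Quot.mk _ (⟨x, hx⟩, σ), ?_⟩
    apply Subtype.ext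
    exact hxy
  have hinjaux : ∀ p p', Phi m (n + 1) pr δ p = Phi m (n + 1) pr δ p' →
      (Quot.mk (balRel m (n + 1) pr δ) p) = Quot.mk (balRel m (n + 1) pr δ) p' := by
    rintro ⟨x, σ⟩ ⟨x', τ⟩ h
    have hval : permAct (n + 1) σ x.val = permAct (n + 1) τ x'.val := congrArg Subtype.val h
    have hyEn : permAct (n + 1) σ x.val ∈ En m (n + 1) pr := permAct_mem_En σ x.2.1
    have hzinj := En_center_inj hyEn
    have hxeq : x.val = permAct (n + 1) σ⁻¹ (permAct (n + 1) σ x.val) := by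
      rw [permAct_mul, inv_mul_cancel, permAct_one]
    have hx'eq : x'.val = permAct (n + 1) τ⁻¹ (permAct (n + 1) σ x.val) := by
      rw [hval, permAct_mul, inv_mul_cancel, permAct_one]
    have hSσ : Srt δ (fun j => pr ((permAct (n + 1) σ x.val) j).1) σ :=
      (uE_iff _ σ hyEn).1 (hxeq ▸ x.2)
    have hSτ : Srt δ (fun j => pr ((permAct (n + 1) σ x.val) j).1) τ :=
      (uE_iff _ τ hyEn).1 (hx'eq ▸ x'.2)
    obtain ⟨k, hk⟩ := srt_coset hm hδ hzinj hSσ hSτ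
    apply Quot.sound
    refine ⟨((finRotate (n + 1)) ^ k)⁻¹,
      Subgroup.inv_mem _ (Subgroup.npow_mem_zpowers _ k), ?_, ?_⟩
    · show x'.val = permAct (n + 1) ((finRotate (n + 1)) ^ k)⁻¹ x.val
      rw [hx'eq, hk, mul_inv_rev, ← permAct_mul, ← hxeq]
    · show τ = σ * (((finRotate (n + 1)) ^ k)⁻¹)⁻¹
      rw [hk, inv_inv]
  have hinj : Function.Injective (PhiQ m (n + 1) pr δ) := by
    intro q q'
    induction q using Quot.ind with
    | _ p =>
      induction q' using Quot.ind with
      | _ p' => exact hinjaux p p'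
  -- continuity
  have hcont : Continuous (Phi m (n + 1) pr δ) := by
    apply Continuous.subtype_mk
    rw [continuous_iff_continuousAt]
    rintro ⟨x₀, σ₀⟩
    have hmem : {p : ↥(uE m (n + 1) pr δ) × Equiv.Perm (Fin (n + 1)) | p.2 = σ₀}
        ∈ nhds (x₀, σ₀) := by
      refine IsOpen.mem_nhds ?_ rfl
      exact (isOpen_discrete ({σ₀} : Set (Equiv.Perm (Fin (n + 1))))).preimage continuous_snd
    have hC : ContinuousAt
        (fun p : ↥(uE m (n + 1) pr δ) × Equiv.Perm (Fin (n + 1)) =>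
          permAct (n + 1) σ₀ p.1.val) (x₀, σ₀) := by
      apply Continuous.continuousAt
      apply continuous_pi
      intro j
      exact (continuous_apply (σ₀⁻¹ j)).comp (continuous_subtype_val.comp continuous_fst)
    exact hC.congr (Filter.eventuallyEq_of_mem hmem fun p hp => by
      simp only [mem_setOf_eq] at hp
      rw [hp])
  -- openness
  have hopenuE := isOpen_uE (n := n + 1) (pr := pr) (δ := δ) hm hpr hδ
  have hopenΦ : IsOpenMap (Phi m (n + 1) pr δ) := by
    intro U hU
    have hW : ∀ σ : Equiv.Perm (Fin (n + 1)),
        IsOpen {v : ↥(En m (n + 1) pr) | ∃ hv : v.val ∈ uE m (n + 1) pr δ,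
          ((⟨v.val, hv⟩ : ↥(uE m (n + 1) pr δ)), σ) ∈ U} := by
      intro σ
      have hUσ : IsOpen ((fun x : ↥(uE m (n + 1) pr δ) => (x, σ)) ⁻¹' U) :=
        hU.preimage (continuous_id.prodMk continuous_const)
      obtain ⟨W, hWopen, hWeq⟩ := isOpen_induced_iff.1 hUσ
      have hset : {v : ↥(En m (n + 1) pr) | ∃ hv : v.val ∈ uE m (n + 1) pr δ,
            ((⟨v.val, hv⟩ : ↥(uE m (n + 1) pr δ)), σ) ∈ U}
          = {v : ↥(En m (n + 1) pr) | v.val ∈ uE m (n + 1) pr δ}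
            ∩ (Subtype.val ⁻¹' W) := by
        ext v
        simp only [mem_setOf_eq, mem_inter_iff, mem_preimage]
        constructor
        · rintro ⟨hv, hvU⟩
          refine ⟨hv, ?_⟩
          have h2 : (⟨v.val, hv⟩ : ↥(uE m (n + 1) pr δ)) ∈
              (fun x : ↥(uE m (n + 1) pr δ) => (x, σ)) ⁻¹' U := hvU
          rw [← hWeq] at h2
          exact h2
        · rintro ⟨hv, hvW⟩
          refine ⟨hv, ?_⟩
          have h2 : (⟨v.val, hv⟩ : ↥(uE m (n + 1) pr δ)) ∈ Subtype.val ⁻¹' W := hvW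
          rw [hWeq] at h2
          exact h2
      rw [hset]
      exact hopenuE.inter (hWopen.preimage continuous_subtype_val)
    have himg : Phi m (n + 1) pr δ '' U = ⋃ σ : Equiv.Perm (Fin (n + 1)),
        (fun y : ↥(En m (n + 1) pr) =>
            (⟨permAct (n + 1) σ⁻¹ y.val, permAct_mem_En σ⁻¹ y.2⟩ : ↥(En m (n + 1) pr)))
          ⁻¹' {v : ↥(En m (n + 1) pr) | ∃ hv : v.val ∈ uE m (n + 1) pr δ,
            ((⟨v.val, hv⟩ : ↥(uE m (n + 1) pr δ)), σ) ∈ U} := by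
      ext y
      simp only [mem_image, mem_iUnion, mem_preimage, mem_setOf_eq]
      constructor
      · rintro ⟨⟨x, σ⟩, hpU, rfl⟩
        have hvm : permAct (n + 1) σ⁻¹ (permAct (n + 1) σ x.val) ∈ uE m (n + 1) pr δ := by
          rw [permAct_mul, inv_mul_cancel, permAct_one]
          exact x.2
        refine ⟨σ, hvm, ?_⟩
        convert hpU using 2
        apply Subtype.ext
        show permAct (n + 1) σ⁻¹ (permAct (n + 1) σ x.val) = x.val
        rw [permAct_mul, inv_mul_cancel, permAct_one]
      · rintro ⟨σ, hv, hU'⟩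
        refine ⟨(⟨permAct (n + 1) σ⁻¹ y.val, hv⟩, σ), hU', ?_⟩
        apply Subtype.ext
        show permAct (n + 1) σ (permAct (n + 1) σ⁻¹ y.val) = y.val
        rw [permAct_mul, mul_inv_cancel, permAct_one]
    rw [himg]
    refine isOpen_iUnion fun σ => (hW σ).preimage ?_
    apply Continuous.subtype_mk
    apply continuous_pi
    intro j
    exact (continuous_apply ((σ⁻¹)⁻¹ j)).comp continuous_subtype_val
  have hopenΦh : IsOpenMap (PhiQ m (n + 1) pr δ) := by
    intro V hV
    have himg : PhiQ m (n + 1) pr δ '' V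
        = Phi m (n + 1) pr δ '' (Quot.mk _ ⁻¹' V) := by
      ext y
      constructor
      · rintro ⟨q, hq, rfl⟩
        obtain ⟨p, rfl⟩ := Quot.exists_rep q
        exact ⟨p, hq, rfl⟩
      · rintro ⟨p, hp, rfl⟩
        exact ⟨Quot.mk _ p, hp, rfl⟩
    rw [himg]
    exact hopenΦ _ (hV.preimage continuous_quot_mk)
  have hcontΦh : Continuous (PhiQ m (n + 1) pr δ) := continuous_quot_lift _ hcont
  refine ⟨part1, part2,
    Equiv.toHomeomorphOfContinuousOpen
      (Equiv.ofBijective (PhiQ m (n + 1) pr δ) ⟨hinj, hsurj⟩) hcontΦh hopenΦh,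
    fun x σ => rfl, ?_, ?_⟩
  · intro ρ' x σ
    show permAct (n + 1) (ρ' * σ) x.val = permAct (n + 1) ρ' (permAct (n + 1) σ x.val)
    rw [permAct_mul]
  · intro a
    exact ⟨fun x hx => transX_mem_uE hpr a hx, fun x hx => transX_mem_En hpr a hx,
      fun x hx σ => rfl⟩

end
end
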